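/- arXiv:2409.11497 — 4 statements merged into one kernel-verified Lean document; each statement's English description precedes it below -/
import Mathlib

section
/- Let μ ∈ ℝ^p and let Σ and Σ' be p×p positive definite matrices. Let X ~ N_p(μ, Σ) and W ~ N_p(0, Σ') be independent random vectors, and set X^(1) = (X + W)/√2 and X^(2) = (X − W)/√2. Then the 2p-dimensional random vector (X^(1), X^(2)) is multivariate Gaussian with mean (μ/√2, μ/√2) and block covariance matrix whose diagonal blocks both equal (Σ + Σ')/2 and whose off-diagonal blocks both equal (Σ − Σ')/2. -/
open MeasureTheory ProbabilityTheory Matrix BigOperators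

noncomputable section

open Real ProbabilityTheory
open scoped NNReal ENNReal

lemma exp_arg_key {v w : ℝ} (hv : 0 < v) (hw : 0 < w) (a z x : ℝ) :
    (-(x - a)^2 / (2*v)) + (-(z - x)^2 / (2*w)) =
      (-(z-a)^2 / (2*(v+w))) + (-((v+w)/(2*v*w)) * (x - (w*a + v*z)/(v+w))^2) := by
  have hvw : v + w ≠ 0 := by positivity
  field_simp
  ring

lemma pdf_mul_eq (a : ℝ) {v w : ℝ≥0} (hv : v ≠ 0) (hw : w ≠ 0) (z x : ℝ) :
    gaussianPDFReal a v x * gaussianPDFReal 0 w (z - x) =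
      ((Real.sqrt (2*π*v))⁻¹ * (Real.sqrt (2*π*w))⁻¹ * rexp (-(z-a)^2 / (2*((v:ℝ)+w)))) *
        rexp (-(((v:ℝ)+w)/(2*(v:ℝ)*w)) * (x - ((w:ℝ)*a + (v:ℝ)*z)/((v:ℝ)+w))^2) := by
  have hv' : (0:ℝ) < v := by positivity
  have hw' : (0:ℝ) < w := by positivity
  have key := exp_arg_key hv' hw' a z x
  simp only [gaussianPDFReal, sub_zero]
  have h2 : rexp (-(x - a)^2 / (2*(v:ℝ))) * rexp (-(z - x)^2 / (2*(w:ℝ))) =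
      rexp (-(z-a)^2 / (2*((v:ℝ)+w))) *
        rexp (-(((v:ℝ)+w)/(2*(v:ℝ)*w)) * (x - ((w:ℝ)*a + (v:ℝ)*z)/((v:ℝ)+w))^2) := by
    rw [← Real.exp_add, ← Real.exp_add, key]
  linear_combination ((Real.sqrt (2*π*(v:ℝ)))⁻¹ * (Real.sqrt (2*π*(w:ℝ)))⁻¹) * h2

lemma integrable_pdf_conv (a : ℝ) {v w : ℝ≥0} (hv : v ≠ 0) (hw : w ≠ 0) (z : ℝ) :
    Integrable (fun x => gaussianPDFReal a v x * gaussianPDFReal 0 w (z - x)) := by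
  have hv' : (0:ℝ) < v := by positivity
  have hw' : (0:ℝ) < w := by positivity
  have hb : (0:ℝ) < ((v:ℝ)+w)/(2*(v:ℝ)*w) := by positivity
  have : (fun x => gaussianPDFReal a v x * gaussianPDFReal 0 w (z - x)) =
      fun x => ((Real.sqrt (2*π*v))⁻¹ * (Real.sqrt (2*π*w))⁻¹ * rexp (-(z-a)^2 / (2*((v:ℝ)+w)))) *
        rexp (-(((v:ℝ)+w)/(2*(v:ℝ)*w)) * (x - ((w:ℝ)*a + (v:ℝ)*z)/((v:ℝ)+w))^2) := by
    funext x; exact pdf_mul_eq a hv hw z x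
  rw [this]
  exact ((integrable_exp_neg_mul_sq hb).comp_sub_right _).const_mul _

lemma integral_pdf_conv (a : ℝ) {v w : ℝ≥0} (hv : v ≠ 0) (hw : w ≠ 0) (z : ℝ) :
    ∫ x, gaussianPDFReal a v x * gaussianPDFReal 0 w (z - x) = gaussianPDFReal a (v+w) z := by
  have hv' : (0:ℝ) < v := by positivity
  have hw' : (0:ℝ) < w := by positivity
  have hb : (0:ℝ) < ((v:ℝ)+w)/(2*(v:ℝ)*w) := by positivity
  simp_rw [pdf_mul_eq a hv hw z]
  rw [integral_const_mul]
  rw [integral_sub_right_eq_self (fun x => rexp (-(((v:ℝ)+w)/(2*(v:ℝ)*w)) * x^2)) _]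
  rw [integral_gaussian]
  rw [gaussianPDFReal]
  have hc : (Real.sqrt (2*π*(v:ℝ)))⁻¹ * (Real.sqrt (2*π*(w:ℝ)))⁻¹ *
      Real.sqrt (π / (((v:ℝ)+w)/(2*(v:ℝ)*w))) = (Real.sqrt (2 * π * ((v+w : ℝ≥0) : ℝ)))⁻¹ := by
    rw [← Real.sqrt_inv, ← Real.sqrt_inv, ← Real.sqrt_mul (by positivity), ← Real.sqrt_mul (by positivity),
      ← Real.sqrt_inv]
    congr 1
    have hπ : (0:ℝ) < π := Real.pi_pos
    push_cast
    field_simp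
  push_cast at hc ⊢
  linear_combination rexp (-(z-a)^2 / (2*((v:ℝ)+w))) * hc

lemma lintegral_conv_eq (a : ℝ) {v w : ℝ≥0} (hv : v ≠ 0) (hw : w ≠ 0) (y : ℝ) :
    ∫⁻ x, gaussianPDF a v x * gaussianPDF 0 w (y - x) = gaussianPDF a (v + w) y := by
  simp only [gaussianPDF]
  have h1 : ∀ x : ℝ, ENNReal.ofReal (gaussianPDFReal a v x) * ENNReal.ofReal (gaussianPDFReal 0 w (y - x))
      = ENNReal.ofReal (gaussianPDFReal a v x * gaussianPDFReal 0 w (y - x)) := fun x =>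
    (ENNReal.ofReal_mul (gaussianPDFReal_nonneg _ _ _)).symm
  simp_rw [h1]
  rw [← ofReal_integral_eq_lintegral_ofReal (integrable_pdf_conv a hv hw y)
    (ae_of_all _ fun x => mul_nonneg (gaussianPDFReal_nonneg _ _ _) (gaussianPDFReal_nonneg _ _ _))]
  rw [integral_pdf_conv a hv hw y]

lemma map_add_prod_gaussian (a : ℝ) (v w : ℝ≥0) :
    ((gaussianReal a v).prod (gaussianReal 0 w)).map (fun p : ℝ × ℝ => p.1 + p.2)
      = gaussianReal a (v + w) := by
  by_cases hv : v = 0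
  · subst hv
    rw [gaussianReal_zero_var, Measure.dirac_prod,
      Measure.map_map (show Measurable (fun p : ℝ × ℝ => p.1 + p.2) from measurable_fst.add measurable_snd) measurable_prodMk_left]
    have h : ((fun p : ℝ × ℝ => p.1 + p.2) ∘ Prod.mk a) = fun y => a + y := rfl
    rw [h, gaussianReal_map_const_add, zero_add, zero_add]
  by_cases hw : w = 0
  · subst hw
    rw [gaussianReal_zero_var (0:ℝ), Measure.prod_dirac,
      Measure.map_map (show Measurable (fun p : ℝ × ℝ => p.1 + p.2) from measurable_fst.add measurable_snd)
        (show Measurable fun x : ℝ => (x, (0:ℝ)) from measurable_id.prodMk measurable_const)]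
    have h : ((fun p : ℝ × ℝ => p.1 + p.2) ∘ (fun x : ℝ => (x, (0:ℝ)))) = id := by
      funext x; simp
    rw [h, Measure.map_id, add_zero]
  have hvw : v + w ≠ 0 := by simp [hv]
  set f := gaussianPDF a v with hf
  set g := gaussianPDF 0 w with hg
  have hfm : Measurable f := measurable_gaussianPDF _ _
  have hgm : Measurable g := measurable_gaussianPDF _ _
  ext s hs
  rw [Measure.map_apply (show Measurable (fun p : ℝ × ℝ => p.1 + p.2) from measurable_fst.add measurable_snd) hs]
  have hA : MeasurableSet ((fun p : ℝ × ℝ => p.1 + p.2) ⁻¹' s) :=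
    (measurable_fst.add measurable_snd) hs
  rw [gaussianReal_of_var_ne_zero _ hv, gaussianReal_of_var_ne_zero _ hw]
  rw [Measure.prod_apply hA]
  set I : ℝ → ℝ≥0∞ := s.indicator 1 with hI
  have hIm : Measurable I := measurable_one.indicator hs
  have inner : ∀ x : ℝ, (volume.withDensity g) (Prod.mk x ⁻¹' ((fun p : ℝ × ℝ => p.1 + p.2) ⁻¹' s))
      = ∫⁻ y, I (x + y) * g y := by
    intro x
    have ht : MeasurableSet ((fun y : ℝ => x + y) ⁻¹' s) := (measurable_const_add x) hs
    have : (Prod.mk x ⁻¹' ((fun p : ℝ × ℝ => p.1 + p.2) ⁻¹' s)) = (fun y : ℝ => x + y) ⁻¹' s := rfl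
    rw [this, withDensity_apply _ ht, ← lintegral_indicator ht]
    refine lintegral_congr fun y => ?_
    by_cases h : x + y ∈ s <;> simp [hI, Set.indicator, h]
  simp_rw [← hf, ← hg, inner]
  rw [lintegral_withDensity_eq_lintegral_mul _ hfm]
  swap
  · exact Measurable.lintegral_prod_right ((hIm.comp (measurable_fst.add measurable_snd)).mul
      (hgm.comp measurable_snd))
  simp only [Pi.mul_apply]
  have step1 : ∀ x : ℝ, f x * ∫⁻ y, I (x + y) * g y = ∫⁻ y, f x * (I (x + y) * g y) := by
    intro x
    have hm1 : Measurable fun y => I (x + y) * g y :=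
      (hIm.comp (measurable_const_add x)).mul hgm
    rw [lintegral_const_mul _ hm1]
  simp_rw [step1]
  have step2 : ∀ x : ℝ, (∫⁻ y, f x * (I (x + y) * g y)) = ∫⁻ y, f x * (I y * g (y - x)) := by
    intro x
    have := lintegral_add_left_eq_self (μ := volume) (fun y => f x * (I y * g (y - x))) x
    rw [← this]
    refine lintegral_congr fun y => ?_
    simp [add_sub_cancel_left]
  simp_rw [step2]
  rw [lintegral_lintegral_swap]
  swap
  · exact ((hfm.comp measurable_fst).mul ((hIm.comp measurable_snd).mul
      (hgm.comp (measurable_snd.sub measurable_fst)))).aemeasurable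
  have step3 : ∀ y : ℝ, (∫⁻ x, f x * (I y * g (y - x))) = I y * ∫⁻ x, f x * g (y - x) := by
    intro y
    have hm2 : Measurable fun x => f x * g (y - x) :=
      hfm.mul (hgm.comp (measurable_const_sub y))
    rw [← lintegral_const_mul _ hm2]
    exact lintegral_congr fun x => by ring
  simp_rw [step3, hf, hg, lintegral_conv_eq a hv hw]
  have : ∀ y : ℝ, I y * gaussianPDF a (v + w) y = s.indicator (gaussianPDF a (v + w)) y := by
    intro y
    by_cases h : y ∈ s <;> simp [hI, Set.indicator, h]
  simp_rw [this]
  rw [lintegral_indicator hs, ← gaussianReal_apply _ hvw]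

lemma indep_gauss_add {Ω : Type*} [MeasurableSpace Ω] {P : Measure Ω} [IsProbabilityMeasure P]
    {Y Z : Ω → ℝ} (hY : Measurable Y) (hZ : Measurable Z) (h : ProbabilityTheory.IndepFun Y Z P)
    {a : ℝ} {v w : ℝ≥0} (hgY : P.map Y = gaussianReal a v) (hgZ : P.map Z = gaussianReal 0 w) :
    P.map (fun ω => Y ω + Z ω) = gaussianReal a (v + w) := by
  have hprod : P.map (fun ω => (Y ω, Z ω)) = (P.map Y).prod (P.map Z) :=
    (ProbabilityTheory.indepFun_iff_map_prod_eq_prod_map_map hY.aemeasurable hZ.aemeasurable).mp h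
  have hc : (fun ω => Y ω + Z ω) = (fun p : ℝ × ℝ => p.1 + p.2) ∘ (fun ω => (Y ω, Z ω)) := rfl
  rw [hc, ← Measure.map_map (show Measurable (fun p : ℝ × ℝ => p.1 + p.2) from measurable_fst.add measurable_snd) (hY.prodMk hZ), hprod,
    hgY, hgZ, map_add_prod_gaussian]



/-- A measure `ν` on `ι → ℝ` is the multivariate Gaussian distribution with mean vector `m` and
covariance matrix `S` if every linear functional pushes `ν` forward to the one-dimensional
Gaussian distribution with the corresponding mean and variance (Cramér–Wold characterization). -/
def IsGaussianVec {ι : Type*} [Fintype ι] (ν : Measure (ι → ℝ)) (m : ι → ℝ)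
    (S : Matrix ι ι ℝ) : Prop :=
  ∀ l : ι → ℝ,
    ν.map (fun x => ∑ i, l i * x i) =
      gaussianReal (∑ i, l i * m i) (∑ i, ∑ j, l i * S i j * l j).toNNReal

/-- Gaussian data fission (Proposition 3): if `X ~ N_p(μ, S)` and `W ~ N_p(0, S')` are
independent, then `((X + W)/√2, (X − W)/√2)` is a `2p`-dimensional Gaussian with mean
`(μ/√2, μ/√2)`, diagonal covariance blocks `(S + S')/2`, and off-diagonal blocks `(S − S')/2`. -/
theorem gaussian_data_fission
    {Ω : Type*} [MeasurableSpace Ω] (P : Measure Ω) [IsProbabilityMeasure P]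
    (p : ℕ) (μ : Fin p → ℝ) (S S' : Matrix (Fin p) (Fin p) ℝ)
    (hS : S.PosDef) (hS' : S'.PosDef)
    (X W : Ω → Fin p → ℝ) (hXm : Measurable X) (hWm : Measurable W)
    (hX : IsGaussianVec (P.map X) μ S)
    (hW : IsGaussianVec (P.map W) (fun _ => 0) S')
    (hindep : IndepFun X W P) :
    IsGaussianVec
      (P.map (fun ω => Sum.elim
        (fun i => (X ω i + W ω i) / Real.sqrt 2)
        (fun i => (X ω i - W ω i) / Real.sqrt 2)))
      (Sum.elim (fun i => μ i / Real.sqrt 2) (fun i => μ i / Real.sqrt 2))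
      (Matrix.fromBlocks
        ((1 / 2 : ℝ) • (S + S')) ((1 / 2 : ℝ) • (S - S'))
        ((1 / 2 : ℝ) • (S - S')) ((1 / 2 : ℝ) • (S + S'))) := by
  intro l
  have hs2 : Real.sqrt 2 * Real.sqrt 2 = 2 := Real.mul_self_sqrt (by norm_num)
  have hs2' : Real.sqrt 2 ≠ 0 := by positivity
  set A : Fin p → ℝ := fun i => (l (Sum.inl i) + l (Sum.inr i)) / Real.sqrt 2 with hA
  set B : Fin p → ℝ := fun i => (l (Sum.inl i) - l (Sum.inr i)) / Real.sqrt 2 with hB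
  have hφ : Measurable fun x : Fin p → ℝ => ∑ i, A i * x i :=
    Finset.measurable_sum _ fun i _ => (measurable_pi_apply i).const_mul _
  have hψ : Measurable fun x : Fin p → ℝ => ∑ i, B i * x i :=
    Finset.measurable_sum _ fun i _ => (measurable_pi_apply i).const_mul _
  set Y : Ω → ℝ := fun ω => ∑ i, A i * X ω i with hYdef
  set Z : Ω → ℝ := fun ω => ∑ i, B i * W ω i with hZdef
  have hYm : Measurable Y := hφ.comp hXm
  have hZm : Measurable Z := hψ.comp hWm
  have hY : P.map Y = gaussianReal (∑ i, A i * μ i) (∑ i, ∑ j, A i * S i j * A j).toNNReal := by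
    have : P.map Y = (P.map X).map (fun x => ∑ i, A i * x i) :=
      (Measure.map_map hφ hXm).symm
    rw [this, hX A]
  have hZ : P.map Z = gaussianReal 0 (∑ i, ∑ j, B i * S' i j * B j).toNNReal := by
    have : P.map Z = (P.map W).map (fun x => ∑ i, B i * x i) :=
      (Measure.map_map hψ hWm).symm
    rw [this, hW B]
    simp
  have hcomp : ProbabilityTheory.IndepFun Y Z P := hindep.comp hφ hψ
  have hsum := indep_gauss_add hYm hZm hcomp hY hZ
  -- measurability of F
  set F : Ω → (Fin p ⊕ Fin p) → ℝ := fun ω => Sum.elim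
      (fun i => (X ω i + W ω i) / Real.sqrt 2)
      (fun i => (X ω i - W ω i) / Real.sqrt 2) with hFdef
  have hFm : Measurable F := by
    rw [measurable_pi_iff]
    rintro (i | i)
    · exact (((measurable_pi_apply i).comp hXm).add ((measurable_pi_apply i).comp hWm)).div_const _
    · exact (((measurable_pi_apply i).comp hXm).sub ((measurable_pi_apply i).comp hWm)).div_const _
  have hl : Measurable fun x : (Fin p ⊕ Fin p) → ℝ => ∑ k, l k * x k :=
    Finset.measurable_sum _ fun k _ => (measurable_pi_apply k).const_mul _
  rw [Measure.map_map hl hFm]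
  have hfun : ((fun x : (Fin p ⊕ Fin p) → ℝ => ∑ k, l k * x k) ∘ F) = fun ω => Y ω + Z ω := by
    funext ω
    show ∑ k, l k * F ω k = _
    rw [Fintype.sum_sum_type]
    simp only [hFdef, Sum.elim_inl, Sum.elim_inr, hYdef, hZdef, hA, hB]
    rw [← Finset.sum_add_distrib, ← Finset.sum_add_distrib]
    refine Finset.sum_congr rfl fun i _ => ?_
    ring
  rw [hfun, hsum]
  -- mean
  have hmean : (∑ i, A i * μ i) = ∑ k, l k * Sum.elim (fun i => μ i / Real.sqrt 2)
      (fun i => μ i / Real.sqrt 2) k := by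
    rw [Fintype.sum_sum_type]
    simp only [Sum.elim_inl, Sum.elim_inr, hA]
    rw [← Finset.sum_add_distrib]
    refine Finset.sum_congr rfl fun i _ => ?_
    ring
  -- variance
  have hq1 : (0:ℝ) ≤ ∑ i, ∑ j, A i * S i j * A j := by
    have h := hS.posSemidef.dotProduct_mulVec_nonneg A
    simpa [dotProduct, Matrix.mulVec, Finset.mul_sum, mul_assoc] using h
  have hq2 : (0:ℝ) ≤ ∑ i, ∑ j, B i * S' i j * B j := by
    have h := hS'.posSemidef.dotProduct_mulVec_nonneg B
    simpa [dotProduct, Matrix.mulVec, Finset.mul_sum, mul_assoc] using h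
  have hvar : (∑ k, ∑ k', l k * (Matrix.fromBlocks
        ((1 / 2 : ℝ) • (S + S')) ((1 / 2 : ℝ) • (S - S'))
        ((1 / 2 : ℝ) • (S - S')) ((1 / 2 : ℝ) • (S + S'))) k k' * l k')
      = (∑ i, ∑ j, A i * S i j * A j) + (∑ i, ∑ j, B i * S' i j * B j) := by
    rw [Fintype.sum_sum_type]
    simp only [Fintype.sum_sum_type, Matrix.fromBlocks_apply₁₁, Matrix.fromBlocks_apply₁₂,
      Matrix.fromBlocks_apply₂₁, Matrix.fromBlocks_apply₂₂, Matrix.smul_apply, Matrix.add_apply,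
      Matrix.sub_apply, smul_eq_mul, hA, hB]
    rw [← Finset.sum_add_distrib, ← Finset.sum_add_distrib]
    refine Finset.sum_congr rfl fun i _ => ?_
    rw [← Finset.sum_add_distrib, ← Finset.sum_add_distrib, ← Finset.sum_add_distrib,
      ← Finset.sum_add_distrib]
    refine Finset.sum_congr rfl fun j _ => ?_
    field_simp
    rw [Real.sq_sqrt (by norm_num : (0:ℝ) ≤ 2)]
    ring
  rw [hmean, show (∑ k, ∑ k', l k * (Matrix.fromBlocks
        ((1 / 2 : ℝ) • (S + S')) ((1 / 2 : ℝ) • (S - S'))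
        ((1 / 2 : ℝ) • (S - S')) ((1 / 2 : ℝ) • (S + S'))) k k' * l k').toNNReal
      = (∑ i, ∑ j, A i * S i j * A j).toNNReal + (∑ i, ∑ j, B i * S' i j * B j).toNNReal from by
    rw [hvar, Real.toNNReal_add hq1 hq2]]
end
end

section
/- Let μ ∈ ℝ, σ² > 0, and let ε_1, ε_2 be positive reals with ε_1 + ε_2 = 1. Let X ~ N(μ, σ²) and Z ~ Beta(ε_1/2, ε_2/2) be independent random variables. Set X^(1) = Z · (X − μ)² and X^(2) = (1 − Z) · (X − μ)². Then X^(1) and X^(2) are independent, X^(1) ~ Gamma(ε_1/2, 1/(2σ²)), and X^(2) ~ Gamma(ε_2/2, 1/(2σ²)). -/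
open MeasureTheory ProbabilityTheory BigOperators
open scoped ENNReal NNReal

noncomputable section

/-- The density of the Beta distribution with parameters `a, b > 0` with respect to Lebesgue
measure: proportional to `x^(a−1) (1−x)^(b−1)` on `(0,1)`, normalized by
`Γ(a+b)/(Γ(a)Γ(b))`. -/
def betaPDF' (a b x : ℝ) : ℝ≥0∞ :=
  if 0 < x ∧ x < 1 then
    ENNReal.ofReal (Real.Gamma (a + b) / (Real.Gamma a * Real.Gamma b)
      * x ^ (a - 1) * (1 - x) ^ (b - 1))
  else 0

/-- The Beta distribution on `ℝ` with parameters `a, b`. -/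
def betaMeasure' (a b : ℝ) : Measure ℝ :=
  volume.withDensity (betaPDF' a b)

namespace GGT

lemma measurable_betaPDF (a b : ℝ) : Measurable (betaPDF' a b) := by
  have h : MeasurableSet {x : ℝ | 0 < x ∧ x < 1} := by
    have : {x : ℝ | 0 < x ∧ x < 1} = Set.Ioo 0 1 := rfl
    rw [this]; exact measurableSet_Ioo
  refine Measurable.ite h ?_ measurable_const
  refine ENNReal.measurable_ofReal.comp ?_
  fun_prop

lemma betaPDF_of_notmem {a b x : ℝ} (hx : ¬(0 < x ∧ x < 1)) : betaPDF' a b x = 0 :=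
  if_neg hx

lemma measurable_gammaPDF (a r : ℝ) : Measurable (gammaPDF a r) :=
  (measurable_gammaPDFReal a r).ennreal_ofReal

lemma gammaPDF_zero_of_nonpos {a r x : ℝ} (ha : a ≠ 1) (hx : x ≤ 0) : gammaPDF a r x = 0 := by
  rcases lt_or_eq_of_le hx with h | h
  · exact gammaPDF_of_neg h
  · subst h
    rw [gammaPDF_of_nonneg le_rfl]
    rw [Real.zero_rpow (by intro hc; apply ha; linarith [sub_eq_zero.mp hc])]
    simp

/-- Product of two withDensity measures on ℝ is a withDensity measure on ℝ × ℝ. -/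
lemma prod_withDensity {f g : ℝ → ℝ≥0∞} (hf : Measurable f) (hg : Measurable g)
    [SigmaFinite (volume.withDensity f)] [SigmaFinite (volume.withDensity g)] :
    (volume.withDensity f).prod (volume.withDensity g)
      = (volume : Measure (ℝ × ℝ)).withDensity (fun p => f p.1 * g p.2) := by
  refine Measure.prod_eq (μ := volume.withDensity f) (ν := volume.withDensity g)
    fun s t hs ht => ?_
  rw [Measure.volume_eq_prod, withDensity_apply _ (hs.prod ht), ← Measure.prod_restrict,
    lintegral_prod_mul hf.aemeasurable hg.aemeasurable,
    withDensity_apply _ hs, withDensity_apply _ ht]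

/-- Pointwise identity relating the gaussian density and the Gamma(1/2) density. -/
lemma gauss_pt {σ2 x : ℝ} (hσ2 : 0 < σ2) (hx : 0 < x) :
    ENNReal.ofReal |2 * x| * gammaPDF (1/2) (1/(2*σ2)) (x^2)
      = 2 * ENNReal.ofReal (gaussianPDFReal 0 σ2.toNNReal x) := by
  rw [gammaPDF_of_nonneg (by positivity), ← ENNReal.ofReal_mul (abs_nonneg _),
    ← ENNReal.ofReal_ofNat 2, ← ENNReal.ofReal_mul (by norm_num)]
  congr 1
  have hv : ((σ2.toNNReal : ℝ≥0) : ℝ) = σ2 := Real.coe_toNNReal _ hσ2.le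
  have h1 : ((x:ℝ)^2 : ℝ) ^ ((1:ℝ)/2 - 1) = x⁻¹ := by
    rw [show (1:ℝ)/2 - 1 = -(1/2) by norm_num, ← Real.rpow_natCast x 2,
      ← Real.rpow_mul hx.le]
    norm_num [Real.rpow_neg_one]
  have h2 : (1/(2*σ2)) ^ ((1:ℝ)/2) = (Real.sqrt (2*σ2))⁻¹ := by
    rw [one_div, ← Real.rpow_neg_one (2*σ2), ← Real.rpow_mul (by positivity)]
    rw [show (-1 : ℝ) * (1/2) = -(1/2) by norm_num, Real.rpow_neg (by positivity),
      Real.sqrt_eq_rpow]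
  have h3 : Real.Gamma (1/2 : ℝ) = Real.sqrt Real.pi := Real.Gamma_one_half_eq
  have h4 : Real.sqrt (2 * Real.pi * σ2) = Real.sqrt (2*σ2) * Real.sqrt Real.pi := by
    rw [show 2 * Real.pi * σ2 = (2*σ2) * Real.pi by ring, Real.sqrt_mul (by positivity)]
  have hexp : Real.exp (-(1/(2*σ2) * x^2)) = Real.exp (-(x - 0)^2 / (2 * σ2)) := by
    congr 1; field_simp; ring
  rw [gaussianPDFReal, hv, h1, h2, h3, h4, abs_of_pos (by positivity), ← hexp]
  have hπ : Real.sqrt Real.pi ≠ 0 := by positivity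
  have hs : Real.sqrt (2*σ2) ≠ 0 := by positivity
  field_simp

/-- Square of a centered gaussian is a Gamma(1/2, 1/(2σ²)) random variable. -/
lemma map_sq_gaussian {σ2 : ℝ} (hσ2 : 0 < σ2) :
    (gaussianReal 0 σ2.toNNReal).map (fun x => x ^ 2) = gammaMeasure (1/2) (1/(2*σ2)) := by
  have hv : σ2.toNNReal ≠ 0 := by
    simp only [ne_eq, Real.toNNReal_eq_zero, not_le]; exact hσ2
  have hsq : Measurable (fun x : ℝ => x ^ 2) := by fun_prop
  refine Measure.ext fun A hA => ?_
  rw [Measure.map_apply hsq hA, gaussianReal_of_var_ne_zero _ hv,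
    withDensity_apply _ (hsq hA), gammaMeasure, withDensity_apply _ hA]
  set φ := gaussianPDF 0 σ2.toNNReal with hφ
  have hφm : Measurable φ := (measurable_gaussianPDFReal 0 σ2.toNNReal).ennreal_ofReal
  set s : Set ℝ := (fun x : ℝ => x ^ 2) ⁻¹' A with hs
  have hsA : MeasurableSet s := hsq hA
  -- split the left side over negatives and positives
  have hunion : (s ∩ Set.Iio 0) ∪ (s ∩ Set.Ioi 0) = s \ {0} := by
    ext x
    simp only [Set.mem_union, Set.mem_inter_iff, Set.mem_Iio, Set.mem_Ioi, Set.mem_diff,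
      Set.mem_singleton_iff]
    constructor
    · rintro (⟨h1, h2⟩ | ⟨h1, h2⟩) <;> exact ⟨h1, by intro h; subst h; simp at h2⟩
    · rintro ⟨h1, h2⟩
      rcases lt_or_gt_of_ne h2 with h | h
      · exact Or.inl ⟨h1, h⟩
      · exact Or.inr ⟨h1, h⟩
  have hdiff : (s \ {0} : Set ℝ) =ᵐ[volume] s :=
    diff_ae_eq_self.mpr (measure_mono_null Set.inter_subset_right (measure_singleton 0))
  have hsplit : ∫⁻ x in s, φ x = (∫⁻ x in s ∩ Set.Iio 0, φ x) + ∫⁻ x in s ∩ Set.Ioi 0, φ x := by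
    rw [← Measure.restrict_congr_set hdiff, ← hunion,
      lintegral_union (hsA.inter measurableSet_Ioi)]
    refine Set.disjoint_left.mpr ?_
    rintro x ⟨_, h1⟩ ⟨_, h2⟩
    simp only [Set.mem_Iio] at h1
    simp only [Set.mem_Ioi] at h2
    linarith
  have hφeven : ∀ x : ℝ, φ (-x) = φ x := by
    intro x
    simp only [hφ, gaussianPDF, gaussianPDFReal, sub_zero, neg_sq]
  have hneg : ∫⁻ x in s ∩ Set.Iio 0, φ x = ∫⁻ x in s ∩ Set.Ioi 0, φ x := by
    have h1 := (Measure.measurePreserving_neg (volume : Measure ℝ)).setLIntegral_comp_preimage_emb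
      (MeasurableEquiv.neg ℝ).measurableEmbedding φ (s ∩ Set.Iio 0)
    have hpre : (Neg.neg : ℝ → ℝ) ⁻¹' (s ∩ Set.Iio 0) = s ∩ Set.Ioi 0 := by
      ext x
      simp only [Set.mem_preimage, Set.mem_inter_iff, Set.mem_Iio, Set.mem_Ioi, hs,
        Set.mem_preimage, neg_sq, neg_lt_zero]
    rw [hpre] at h1
    rw [← h1]
    refine setLIntegral_congr_fun_ae (hsA.inter measurableSet_Ioi) (ae_of_all _ fun x _ => ?_)
    exact hφeven x
  -- right side reduces to positives
  have hgz : ∀ x : ℝ, x ≤ 0 → gammaPDF (1/2) (1/(2*σ2)) x = 0 := fun x hx =>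
    gammaPDF_zero_of_nonpos (by norm_num) hx
  have hrs : ∫⁻ x in A, gammaPDF (1/2) (1/(2*σ2)) x
      = ∫⁻ x in A ∩ Set.Ioi 0, gammaPDF (1/2) (1/(2*σ2)) x := by
    have hid : ∀ x : ℝ, gammaPDF (1/2) (1/(2*σ2)) x
        = (Set.Ioi 0).indicator (gammaPDF (1/2) (1/(2*σ2))) x := by
      intro x
      by_cases h : x ∈ Set.Ioi 0
      · rw [Set.indicator_of_mem h]
      · rw [Set.indicator_of_notMem h, hgz x (not_lt.mp h)]
    rw [setLIntegral_congr_fun_ae hA (ae_of_all _ fun x _ => hid x),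
      lintegral_indicator measurableSet_Ioi, Measure.restrict_restrict measurableSet_Ioi,
      Set.inter_comm]
  -- change of variables on the positives
  have himg : (fun x : ℝ => x ^ 2) '' (s ∩ Set.Ioi 0) = A ∩ Set.Ioi 0 := by
    ext u
    constructor
    · rintro ⟨x, ⟨hxA, hx0⟩, rfl⟩
      exact ⟨hxA, by show (0:ℝ) < x^2; exact pow_pos hx0 2⟩
    · rintro ⟨huA, hu0⟩
      refine ⟨Real.sqrt u, ⟨?_, Real.sqrt_pos.mpr hu0⟩, Real.sq_sqrt hu0.le⟩
      simp only [hs, Set.mem_preimage, Real.sq_sqrt hu0.le]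
      exact huA
  have hinj : Set.InjOn (fun x : ℝ => x ^ 2) (s ∩ Set.Ioi 0) := by
    intro x hx y hy h
    have h' : Real.sqrt (x^2) = Real.sqrt (y^2) := congrArg Real.sqrt h
    rwa [Real.sqrt_sq hx.2.le, Real.sqrt_sq hy.2.le] at h'
  have hder : ∀ x ∈ s ∩ Set.Ioi 0, HasFDerivWithinAt (fun x : ℝ => x ^ 2)
      (ContinuousLinearMap.toSpanSingleton ℝ (2*x)) (s ∩ Set.Ioi 0) x := by
    intro x _
    have := (hasDerivAt_pow 2 x).hasFDerivAt
    simpa using this.hasFDerivWithinAt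
  have hcv := lintegral_image_eq_lintegral_abs_det_fderiv_mul volume
    (hsA.inter measurableSet_Ioi) hder hinj (gammaPDF (1/2) (1/(2*σ2)))
  rw [himg] at hcv
  rw [hrs, hcv, hsplit, hneg, ← two_mul, ← lintegral_const_mul 2 hφm]
  refine setLIntegral_congr_fun_ae (hsA.inter measurableSet_Ioi)
    (ae_of_all _ fun x hx => ?_)
  rw [ContinuousLinearMap.det_toSpanSingleton]
  exact (gauss_pt hσ2 hx.2).symm

end GGT

namespace GGT

/-- The thinning map `(z, w) ↦ (z w, (1−z) w)`. -/
def Tmap : ℝ × ℝ → ℝ × ℝ := fun p => (p.1 * p.2, (1 - p.1) * p.2)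

lemma measurable_Tmap : Measurable Tmap := by
  unfold Tmap; fun_prop

/-- The derivative of `Tmap`. -/
def Tder (p : ℝ × ℝ) : ℝ × ℝ →L[ℝ] ℝ × ℝ :=
  (p.1 • ContinuousLinearMap.snd ℝ ℝ ℝ + p.2 • ContinuousLinearMap.fst ℝ ℝ ℝ).prod
    ((1 - p.1) • ContinuousLinearMap.snd ℝ ℝ ℝ
      + p.2 • ((0 : ℝ × ℝ →L[ℝ] ℝ) - ContinuousLinearMap.fst ℝ ℝ ℝ))

lemma hasFDerivAt_Tmap (p : ℝ × ℝ) : HasFDerivAt Tmap (Tder p) p := by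
  have h1 : HasFDerivAt (fun q : ℝ × ℝ => q.1 * q.2)
      (p.1 • ContinuousLinearMap.snd ℝ ℝ ℝ + p.2 • ContinuousLinearMap.fst ℝ ℝ ℝ) p :=
    (hasFDerivAt_fst (𝕜 := ℝ) (E := ℝ) (F := ℝ) (p := p)).mul hasFDerivAt_snd
  have h2 : HasFDerivAt (fun q : ℝ × ℝ => (1 - q.1) * q.2)
      ((1 - p.1) • ContinuousLinearMap.snd ℝ ℝ ℝ
        + p.2 • ((0 : ℝ × ℝ →L[ℝ] ℝ) - ContinuousLinearMap.fst ℝ ℝ ℝ)) p :=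
    ((hasFDerivAt_const (1:ℝ) p).sub hasFDerivAt_fst).mul hasFDerivAt_snd
  exact h1.prodMk h2

lemma det_Tder (p : ℝ × ℝ) : (Tder p).det = p.2 := by
  have h : (Tder p).det = LinearMap.det ((Tder p : ℝ × ℝ →ₗ[ℝ] ℝ × ℝ)) := rfl
  rw [h, ← LinearMap.det_toMatrix (Module.Basis.finTwoProd ℝ), Matrix.det_fin_two]
  simp only [LinearMap.toMatrix_apply, Module.Basis.finTwoProd_zero, Module.Basis.finTwoProd_one,
    Module.Basis.coe_finTwoProd_repr, ContinuousLinearMap.coe_coe, Tder,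
    ContinuousLinearMap.prod_apply, ContinuousLinearMap.add_apply,
    ContinuousLinearMap.coe_smul', Pi.smul_apply, ContinuousLinearMap.coe_snd',
    ContinuousLinearMap.coe_fst', ContinuousLinearMap.sub_apply,
    ContinuousLinearMap.zero_apply, smul_eq_mul, Matrix.cons_val_zero, Matrix.cons_val_one,
    Matrix.head_cons]
  ring

/-- Pointwise beta–gamma density identity. -/
lemma betagamma_pt {a b r z w : ℝ} (ha : 0 < a) (hb : 0 < b) (hr : 0 < r)
    (hz0 : 0 < z) (hz1 : z < 1) (hw : 0 < w) :
    ENNReal.ofReal |w| * (gammaPDF a r (z * w) * gammaPDF b r ((1 - z) * w))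
      = betaPDF' a b z * gammaPDF (a + b) r w := by
  have hz1' : (0:ℝ) ≤ 1 - z := by linarith
  have hΓa := Real.Gamma_pos_of_pos ha
  have hΓb := Real.Gamma_pos_of_pos hb
  have hΓab := Real.Gamma_pos_of_pos (by linarith : (0:ℝ) < a + b)
  rw [gammaPDF_of_nonneg (mul_nonneg hz0.le hw.le),
    gammaPDF_of_nonneg (mul_nonneg hz1' hw.le), gammaPDF_of_nonneg hw.le,
    betaPDF', if_pos ⟨hz0, hz1⟩,
    ← ENNReal.ofReal_mul (by positivity),
    ← ENNReal.ofReal_mul (abs_nonneg _),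
    ← ENNReal.ofReal_mul (by positivity)]
  congr 1
  rw [abs_of_pos hw, Real.mul_rpow hz0.le hw.le, Real.mul_rpow hz1' hw.le]
  have hw1 : w * (w ^ (a-1) * w ^ (b-1)) = w ^ (a+b-1) := by
    nth_rewrite 1 [← Real.rpow_one w]
    rw [← Real.rpow_add hw, ← Real.rpow_add hw]
    congr 1; ring
  have hr1 : r ^ a * r ^ b = r ^ (a+b) := (Real.rpow_add hr a b).symm
  have hexp : Real.exp (-(r*(z*w))) * Real.exp (-(r*((1-z)*w))) = Real.exp (-(r*w)) := by
    rw [← Real.exp_add]; congr 1; ring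
  calc w * (r ^ a / Real.Gamma a * (z ^ (a-1) * w ^ (a-1)) * Real.exp (-(r*(z*w)))
        * (r ^ b / Real.Gamma b * ((1-z) ^ (b-1) * w ^ (b-1)) * Real.exp (-(r*((1-z)*w)))))
      = (r ^ a * r ^ b) / (Real.Gamma a * Real.Gamma b) * (z ^ (a-1) * (1-z) ^ (b-1))
        * (w * (w ^ (a-1) * w ^ (b-1)))
        * (Real.exp (-(r*(z*w))) * Real.exp (-(r*((1-z)*w)))) := by ring
    _ = r ^ (a+b) / (Real.Gamma a * Real.Gamma b) * (z ^ (a-1) * (1-z) ^ (b-1))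
        * w ^ (a+b-1) * Real.exp (-(r*w)) := by rw [hw1, hr1, hexp]
    _ = Real.Gamma (a+b) / (Real.Gamma a * Real.Gamma b) * z ^ (a-1) * (1-z) ^ (b-1)
        * (r ^ (a+b) / Real.Gamma (a+b) * w ^ (a+b-1) * Real.exp (-(r*w))) := by
        field_simp

end GGT

namespace GGT

lemma inj_Tmap : Set.InjOn Tmap (Set.Ioo (0:ℝ) 1 ×ˢ Set.Ioi (0:ℝ)) := by
  rintro ⟨z, w⟩ ⟨hz, hw⟩ ⟨z', w'⟩ ⟨hz', hw'⟩ h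
  simp only [Tmap, Prod.mk.injEq] at h
  obtain ⟨h1, h2⟩ := h
  have hww : w = w' := by linarith [h1, h2]
  subst hww
  have hwne : w ≠ 0 := (ne_of_gt hw)
  have : z = z' := by
    have := mul_right_cancel₀ hwne h1
    exact this
  simp [this]

lemma img_Tmap : Tmap '' (Set.Ioo (0:ℝ) 1 ×ˢ Set.Ioi (0:ℝ)) = Set.Ioi (0:ℝ) ×ˢ Set.Ioi (0:ℝ) := by
  ext ⟨u, v⟩
  constructor
  · rintro ⟨⟨z, w⟩, ⟨⟨hz0, hz1⟩, hw⟩, heq⟩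
    simp only [Set.mem_Ioi] at hw
    rw [← heq]
    exact ⟨mul_pos hz0 hw, mul_pos (by linarith) hw⟩
  · rintro ⟨hu, hv⟩
    simp only [Set.mem_Ioi] at hu hv
    have hs : (0:ℝ) < u + v := by linarith
    refine ⟨(u / (u + v), u + v), ⟨⟨div_pos hu hs, (div_lt_one hs).mpr (by linarith)⟩, hs⟩, ?_⟩
    simp only [Tmap, Prod.mk.injEq]
    constructor
    · field_simp
    · field_simp; ring

/-- Key beta–gamma algebra identity: the thinning map sends
`Beta(a,b) ⊗ Gamma(a+b, r)` to `Gamma(a,r) ⊗ Gamma(b,r)`. -/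
lemma key_map (a b r : ℝ) (ha : 0 < a) (hb : 0 < b) (hr : 0 < r)
    (ha1 : a ≠ 1) (hb1 : b ≠ 1) (hab1 : a + b ≠ 1)
    [SigmaFinite (betaMeasure' a b)] :
    ((betaMeasure' a b).prod (gammaMeasure (a + b) r)).map Tmap
      = (gammaMeasure a r).prod (gammaMeasure b r) := by
  haveI := isProbabilityMeasure_gammaMeasure (by linarith : (0:ℝ) < a + b) hr
  haveI := isProbabilityMeasure_gammaMeasure ha hr
  haveI := isProbabilityMeasure_gammaMeasure hb hr
  haveI : SigmaFinite (volume.withDensity (betaPDF' a b)) := ‹SigmaFinite (betaMeasure' a b)›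
  haveI : SigmaFinite (volume.withDensity (gammaPDF (a + b) r)) :=
    inferInstanceAs (SigmaFinite (gammaMeasure (a + b) r))
  haveI : SigmaFinite (volume.withDensity (gammaPDF a r)) :=
    inferInstanceAs (SigmaFinite (gammaMeasure a r))
  haveI : SigmaFinite (volume.withDensity (gammaPDF b r)) :=
    inferInstanceAs (SigmaFinite (gammaMeasure b r))
  have hD : (betaMeasure' a b).prod (gammaMeasure (a + b) r)
      = (volume : Measure (ℝ × ℝ)).withDensity
          (fun p => betaPDF' a b p.1 * gammaPDF (a + b) r p.2) :=
    prod_withDensity (measurable_betaPDF a b) (measurable_gammaPDF _ _)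
  have hG : (gammaMeasure a r).prod (gammaMeasure b r)
      = (volume : Measure (ℝ × ℝ)).withDensity
          (fun p => gammaPDF a r p.1 * gammaPDF b r p.2) :=
    prod_withDensity (measurable_gammaPDF _ _) (measurable_gammaPDF _ _)
  set D : ℝ × ℝ → ℝ≥0∞ := fun p => betaPDF' a b p.1 * gammaPDF (a + b) r p.2 with hDdef
  set G : ℝ × ℝ → ℝ≥0∞ := fun p => gammaPDF a r p.1 * gammaPDF b r p.2 with hGdef
  have hDm : Measurable D := ((measurable_betaPDF a b).comp measurable_fst).mul
    ((measurable_gammaPDF _ _).comp measurable_snd)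
  have hGm : Measurable G := ((measurable_gammaPDF _ _).comp measurable_fst).mul
    ((measurable_gammaPDF _ _).comp measurable_snd)
  set S : Set (ℝ × ℝ) := Set.Ioo (0:ℝ) 1 ×ˢ Set.Ioi (0:ℝ) with hSdef
  have hS : MeasurableSet S := measurableSet_Ioo.prod measurableSet_Ioi
  set S' : Set (ℝ × ℝ) := Set.Ioi (0:ℝ) ×ˢ Set.Ioi (0:ℝ) with hS'def
  have hS' : MeasurableSet S' := measurableSet_Ioi.prod measurableSet_Ioi
  have hDzero : ∀ p : ℝ × ℝ, p ∉ S → D p = 0 := by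
    rintro ⟨z, w⟩ hp
    by_cases hzw : 0 < z ∧ z < 1
    · have hw : w ≤ 0 := by
        by_contra hw'
        exact hp ⟨hzw, not_le.mp hw'⟩
      simp [hDdef, gammaPDF_zero_of_nonpos hab1 hw]
    · simp [hDdef, betaPDF_of_notmem hzw]
  have hGzero : ∀ p : ℝ × ℝ, p ∉ S' → G p = 0 := by
    rintro ⟨u, v⟩ hp
    by_cases hu : 0 < u
    · have hv : v ≤ 0 := by
        by_contra hv'
        exact hp ⟨hu, not_le.mp hv'⟩
      simp [hGdef, gammaPDF_zero_of_nonpos hb1 hv]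
    · simp [hGdef, gammaPDF_zero_of_nonpos ha1 (not_lt.mp hu)]
  refine Measure.ext fun A hA => ?_
  have hTA : MeasurableSet (Tmap ⁻¹' A) := measurable_Tmap hA
  rw [Measure.map_apply measurable_Tmap hA, hD, hG,
    withDensity_apply _ hTA, withDensity_apply _ hA]
  -- restrict both sides to the supports
  have hres1 : ∫⁻ p in Tmap ⁻¹' A, D p = ∫⁻ p in S ∩ (Tmap ⁻¹' A), D p := by
    rw [setLIntegral_congr_fun_ae hTA (ae_of_all _ fun p _ => by
      by_cases h : p ∈ S
      · exact (Set.indicator_of_mem h D).symm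
      · rw [Set.indicator_of_notMem h, hDzero p h]),
      lintegral_indicator hS, Measure.restrict_restrict hS]
  have hres2 : ∫⁻ p in A, G p = ∫⁻ p in S' ∩ A, G p := by
    rw [setLIntegral_congr_fun_ae hA (ae_of_all _ fun p _ => by
      by_cases h : p ∈ S'
      · exact (Set.indicator_of_mem h G).symm
      · rw [Set.indicator_of_notMem h, hGzero p h]),
      lintegral_indicator hS', Measure.restrict_restrict hS']
  -- change of variables
  have hder : ∀ p ∈ S, HasFDerivWithinAt Tmap (Tder p) S p :=
    fun p _ => (hasFDerivAt_Tmap p).hasFDerivWithinAt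
  have hcv := lintegral_image_eq_lintegral_abs_det_fderiv_mul volume hS hder inj_Tmap
    (A.indicator G)
  rw [img_Tmap] at hcv
  have hL : ∫⁻ p in S', A.indicator G p = ∫⁻ p in S' ∩ A, G p := by
    rw [lintegral_indicator hA, Measure.restrict_restrict hA, Set.inter_comm]
  have hpt : ∀ p ∈ S, ENNReal.ofReal |(Tder p).det| * A.indicator G (Tmap p)
      = (Tmap ⁻¹' A).indicator D p := by
    rintro p ⟨⟨hz0, hz1⟩, hw⟩
    rw [det_Tder]
    by_cases hmem : Tmap p ∈ A
    · rw [Set.indicator_of_mem hmem, Set.indicator_of_mem (Set.mem_preimage.mpr hmem)]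
      have := betagamma_pt ha hb hr hz0 hz1 hw
      simpa [hGdef, hDdef, Tmap] using this
    · rw [Set.indicator_of_notMem hmem,
        Set.indicator_of_notMem (fun h => hmem (Set.mem_preimage.mp h)), mul_zero]
  have hR : ∫⁻ p in S, ENNReal.ofReal |(Tder p).det| * A.indicator G (Tmap p)
      = ∫⁻ p in S ∩ (Tmap ⁻¹' A), D p := by
    rw [setLIntegral_congr_fun_ae hS (ae_of_all _ hpt), lintegral_indicator hTA,
      Measure.restrict_restrict hTA, Set.inter_comm]
  rw [hres1, hres2, ← hR, ← hcv, hL]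

end GGT

/-- Proposition 6 in the two-fold case: if `X ~ N(μ, σ²)` and `Z ~ Beta(ε₁/2, ε₂/2)` are
independent with `ε₁ + ε₂ = 1`, `ε₁, ε₂ > 0`, then `X⁽¹⁾ = Z (X − μ)²` and
`X⁽²⁾ = (1 − Z)(X − μ)²` are independent, with `X⁽ᵏ⁾ ~ Gamma(ε_k/2, 1/(2σ²))`. -/
theorem univariate_gaussian_gamma_thinning
    {Ω : Type*} [MeasurableSpace Ω] (P : Measure Ω) [IsProbabilityMeasure P]
    (μ σ2 : ℝ) (hσ2 : 0 < σ2)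
    (ε1 ε2 : ℝ) (hε1 : 0 < ε1) (hε2 : 0 < ε2) (hsum : ε1 + ε2 = 1)
    (X Z : Ω → ℝ) (hXm : Measurable X) (hZm : Measurable Z)
    (hX : P.map X = gaussianReal μ σ2.toNNReal)
    (hZ : P.map Z = betaMeasure' (ε1 / 2) (ε2 / 2))
    (hindep : IndepFun X Z P) :
    IndepFun (fun ω => Z ω * (X ω - μ) ^ 2) (fun ω => (1 - Z ω) * (X ω - μ) ^ 2) P ∧
      P.map (fun ω => Z ω * (X ω - μ) ^ 2) = gammaMeasure (ε1 / 2) (1 / (2 * σ2)) ∧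
      P.map (fun ω => (1 - Z ω) * (X ω - μ) ^ 2) = gammaMeasure (ε2 / 2) (1 / (2 * σ2)) := by
  classical
  have ha : 0 < ε1 / 2 := by positivity
  have hb : 0 < ε2 / 2 := by positivity
  have ha1 : ε1 / 2 ≠ 1 := by intro h; nlinarith
  have hb1 : ε2 / 2 ≠ 1 := by intro h; nlinarith
  have hab : ε1 / 2 + ε2 / 2 = 1 / 2 := by linarith
  have hab1 : ε1 / 2 + ε2 / 2 ≠ 1 := by rw [hab]; norm_num
  have hr : 0 < 1 / (2 * σ2) := by positivity
  haveI hBprob : IsProbabilityMeasure (betaMeasure' (ε1 / 2) (ε2 / 2)) :=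
    hZ ▸ Measure.isProbabilityMeasure_map hZm.aemeasurable
  haveI hGa : IsProbabilityMeasure (gammaMeasure (ε1 / 2) (1 / (2 * σ2))) :=
    isProbabilityMeasure_gammaMeasure ha hr
  haveI hGb : IsProbabilityMeasure (gammaMeasure (ε2 / 2) (1 / (2 * σ2))) :=
    isProbabilityMeasure_gammaMeasure hb hr
  set W : Ω → ℝ := fun ω => (X ω - μ) ^ 2 with hWdef
  have hWm : Measurable W := by fun_prop
  -- law of W
  have hWlaw : P.map W = gammaMeasure (1/2) (1 / (2 * σ2)) := by
    have hcomp : W = (fun x : ℝ => x ^ 2) ∘ (fun x : ℝ => x + (-μ)) ∘ X := by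
      funext ω; simp [hWdef, sub_eq_add_neg]
    have hsq : Measurable (fun x : ℝ => x ^ 2) := by fun_prop
    have haddm : Measurable (fun x : ℝ => x + (-μ)) := by fun_prop
    rw [hcomp, ← Function.comp_assoc, ← Measure.map_map (hsq.comp haddm) hXm,
      ← Measure.map_map hsq haddm, hX, gaussianReal_map_add_const (-μ), add_neg_cancel]
    exact GGT.map_sq_gaussian hσ2
  -- joint law of (Z, W)
  have hZW : IndepFun Z W P := by
    have h := hindep.symm.comp (measurable_id) (show Measurable (fun x : ℝ => (x - μ) ^ 2) by fun_prop)
    exact h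
  have hpair : P.map (fun ω => (Z ω, W ω))
      = (betaMeasure' (ε1 / 2) (ε2 / 2)).prod (gammaMeasure (1/2) (1 / (2 * σ2))) := by
    rw [← hZ, ← hWlaw]
    exact (indepFun_iff_map_prod_eq_prod_map_map hZm.aemeasurable hWm.aemeasurable).mp hZW
  -- push forward through the thinning map
  have hmapT : P.map (fun ω => (Z ω * W ω, (1 - Z ω) * W ω))
      = (gammaMeasure (ε1 / 2) (1 / (2 * σ2))).prod (gammaMeasure (ε2 / 2) (1 / (2 * σ2))) := by
    have hcomp : (fun ω => (Z ω * W ω, (1 - Z ω) * W ω))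
        = GGT.Tmap ∘ (fun ω => (Z ω, W ω)) := rfl
    rw [hcomp, ← Measure.map_map GGT.measurable_Tmap (hZm.prodMk hWm), hpair, ← hab]
    exact GGT.key_map _ _ _ ha hb hr ha1 hb1 hab1
  have hpm : Measurable (fun ω => (Z ω * W ω, (1 - Z ω) * W ω)) := by fun_prop
  have hUm : Measurable (fun ω => Z ω * W ω) := by fun_prop
  have hVm : Measurable (fun ω => (1 - Z ω) * W ω) := by fun_prop
  -- marginals
  have hU : P.map (fun ω => Z ω * W ω) = gammaMeasure (ε1 / 2) (1 / (2 * σ2)) := by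
    have hcomp : (fun ω => Z ω * W ω)
        = Prod.fst ∘ (fun ω => (Z ω * W ω, (1 - Z ω) * W ω)) := rfl
    rw [hcomp, ← Measure.map_map measurable_fst hpm, hmapT, Measure.map_fst_prod,
      measure_univ, one_smul]
  have hV : P.map (fun ω => (1 - Z ω) * W ω) = gammaMeasure (ε2 / 2) (1 / (2 * σ2)) := by
    have hcomp : (fun ω => (1 - Z ω) * W ω)
        = Prod.snd ∘ (fun ω => (Z ω * W ω, (1 - Z ω) * W ω)) := rfl
    rw [hcomp, ← Measure.map_map measurable_snd hpm, hmapT, Measure.map_snd_prod,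
      measure_univ, one_smul]
  have hIndep : IndepFun (fun ω => Z ω * W ω) (fun ω => (1 - Z ω) * W ω) P := by
    rw [indepFun_iff_map_prod_eq_prod_map_map hUm.aemeasurable hVm.aemeasurable,
      hU, hV]
    exact hmapT
  exact ⟨hIndep, hU, hV⟩
end
end

section
/- Let μ ∈ ℝ^p, let Σ and Σ' be p×p positive definite matrices, let r ≥ 1 and K = r + 1. Let X, W_1, …, W_r be mutually independent random vectors in ℝ^p with X ~ N_p(μ, Σ) and W_j ~ N_p(0, Σ') for each j. Let Q be a K×K orthogonal matrix with first column Q_X = (q_1, …, q_K)ᵀ, and for k = 1, …, K define X^(k) = q_k X + Σ_{j=1}^{r} Q_{k,j+1} W_j. Then the Kp-dimensional random vector obtained by stacking X^(1), …, X^(K) is multivariate Gaussian with mean Q_X ⊗ μ and covariance matrix Q_X Q_Xᵀ ⊗ Σ + (I_K − Q_X Q_Xᵀ) ⊗ Σ'. -/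
open MeasureTheory ProbabilityTheory Matrix BigOperators

noncomputable section

section Helpers
open Real ENNReal
open scoped NNReal


lemma sqrt_const_eq {v1 v2 : ℝ} (h1 : 0 < v1) (h2 : 0 < v2) :
    (√(2 * π * v1))⁻¹ * (√(2 * π * v2))⁻¹ * √(π / ((v1 + v2) / (2 * v1 * v2)))
      = (√(2 * π * (v1 + v2)))⁻¹ := by
  have hs : (0:ℝ) < v1 + v2 := by linarith
  have hπ := pi_pos
  rw [← Real.sqrt_inv, ← Real.sqrt_inv, ← Real.sqrt_mul (by positivity),
    ← Real.sqrt_mul (by positivity), ← Real.sqrt_inv]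
  congr 1
  field_simp

lemma conv_integrand {m1 m2 : ℝ} {v1 v2 : ℝ} (h1 : 0 < v1) (h2 : 0 < v2) (z : ℝ) :
    ∫ x : ℝ, (√(2 * π * v1))⁻¹ * rexp (- (x - m1)^2 / (2 * v1)) *
      ((√(2 * π * v2))⁻¹ * rexp (- (z - x - m2)^2 / (2 * v2)))
      = (√(2 * π * (v1 + v2)))⁻¹ * rexp (- (z - (m1 + m2))^2 / (2 * (v1 + v2))) := by
  have hs : (0:ℝ) < v1 + v2 := by linarith
  set a : ℝ := z - m1 - m2 with ha
  set b : ℝ := (v1 + v2) / (2 * v1 * v2) with hb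
  have hbpos : 0 < b := by positivity
  set d : ℝ := m1 + v1 * a / (v1 + v2) with hd
  set A : ℝ := (√(2 * π * v1))⁻¹
  set B : ℝ := (√(2 * π * v2))⁻¹
  have key : ∀ x : ℝ, A * rexp (- (x - m1)^2 / (2 * v1)) *
      (B * rexp (- (z - x - m2)^2 / (2 * v2)))
      = (A * B * rexp (- a^2 / (2 * (v1 + v2)))) * rexp (-b * (x - d)^2) := by
    intro x
    have hE : - (x - m1)^2 / (2 * v1) + - (z - x - m2)^2 / (2 * v2)
        = - a^2 / (2 * (v1 + v2)) + -b * (x - d)^2 := by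
      rw [hb, hd, ha]; field_simp; ring
    calc A * rexp (- (x - m1)^2 / (2 * v1)) * (B * rexp (- (z - x - m2)^2 / (2 * v2)))
        = A * B * rexp (- (x - m1)^2 / (2 * v1) + - (z - x - m2)^2 / (2 * v2)) := by
          rw [Real.exp_add]; ring
      _ = A * B * rexp (- a^2 / (2 * (v1 + v2)) + -b * (x - d)^2) := by rw [hE]
      _ = (A * B * rexp (- a^2 / (2 * (v1 + v2)))) * rexp (-b * (x - d)^2) := by
          rw [Real.exp_add]; ring
  simp_rw [key]
  rw [MeasureTheory.integral_const_mul,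
    integral_sub_right_eq_self (fun x => rexp (-b * x ^ 2)) d, integral_gaussian]
  rw [show A * B * rexp (- a^2 / (2*(v1+v2))) * √(π / b)
    = (A * B * √(π / b)) * rexp (- a^2 / (2*(v1+v2))) by ring, hb, sqrt_const_eq h1 h2]
  congr 2
  rw [ha]; ring

lemma gaussianPDFReal_le (m : ℝ) (v : ℝ≥0) (x : ℝ) :
    gaussianPDFReal m v x ≤ (√(2 * π * v))⁻¹ := by
  rw [gaussianPDFReal]
  have h1 : rexp (- (x - m)^2 / (2 * v)) ≤ 1 := by
    rw [Real.exp_le_one_iff]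
    apply div_nonpos_of_nonpos_of_nonneg
    · simp [sq_nonneg]
    · positivity
  calc (√(2 * π * v))⁻¹ * rexp (- (x - m)^2 / (2 * v)) ≤ (√(2 * π * v))⁻¹ * 1 :=
      mul_le_mul_of_nonneg_left h1 (by positivity)
    _ = _ := mul_one _

lemma integrable_gauss_mul (m1 m2 : ℝ) (v1 v2 : ℝ≥0) (z : ℝ) :
    Integrable (fun x => gaussianPDFReal m1 v1 x * gaussianPDFReal m2 v2 (z - x)) := by
  have h := Integrable.bdd_mul (c := (√(2 * π * v2))⁻¹)
    (ProbabilityTheory.integrable_gaussianPDFReal m1 v1)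
    (f := fun x => gaussianPDFReal m2 v2 (z - x))
    (((ProbabilityTheory.measurable_gaussianPDFReal m2 v2).comp
      (measurable_const.sub measurable_id)).aestronglyMeasurable)
    (Filter.Eventually.of_forall (fun x => by
      rw [Real.norm_of_nonneg (ProbabilityTheory.gaussianPDFReal_nonneg _ _ _)]
      exact gaussianPDFReal_le _ _ _))
  simpa [mul_comm] using h

lemma lintegral_gauss_conv {m1 m2 : ℝ} {v1 v2 : ℝ≥0} (h1 : v1 ≠ 0) (h2 : v2 ≠ 0) (z : ℝ) :
    ∫⁻ x, gaussianPDF m1 v1 x * gaussianPDF m2 v2 (z - x)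
      = gaussianPDF (m1 + m2) (v1 + v2) z := by
  have h1' : (0:ℝ) < v1 := by exact_mod_cast lt_of_le_of_ne zero_le (Ne.symm h1)
  have h2' : (0:ℝ) < v2 := by exact_mod_cast lt_of_le_of_ne zero_le (Ne.symm h2)
  simp_rw [gaussianPDF,
    ← ENNReal.ofReal_mul (ProbabilityTheory.gaussianPDFReal_nonneg m1 v1 _)]
  rw [← ofReal_integral_eq_lintegral_ofReal (integrable_gauss_mul m1 m2 v1 v2 z)
    (Filter.Eventually.of_forall (fun x => mul_nonneg
      (ProbabilityTheory.gaussianPDFReal_nonneg _ _ _)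
      (ProbabilityTheory.gaussianPDFReal_nonneg _ _ _)))]
  congr 1
  simp_rw [gaussianPDFReal]
  have := conv_integrand (m1 := m1) (m2 := m2) h1' h2' z
  rw [this]
  norm_num

lemma shift_setLIntegral (g : ℝ → ℝ≥0∞) (hg : Measurable g) (x : ℝ) {s : Set ℝ}
    (hs : MeasurableSet s) :
    ∫⁻ y in (fun y => x + y) ⁻¹' s, g y ∂volume = ∫⁻ z in s, g (z - x) ∂volume := by
  rw [← lintegral_indicator (hs.preimage (measurable_const_add x)) g,
    ← lintegral_indicator hs (fun z => g (z - x))]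
  conv_rhs => rw [show (volume : Measure ℝ) = Measure.map (fun y => x + y) volume from
    (MeasureTheory.map_add_left_eq_self volume x).symm]
  have hmeas : Measurable (s.indicator (fun z : ℝ => g (z - x))) :=
    Measurable.indicator (by fun_prop) hs
  rw [lintegral_map hmeas (measurable_const_add x)]
  congr 1
  ext y
  by_cases hy : x + y ∈ s <;>
    simp [Set.indicator_apply, hy, Set.mem_preimage]

lemma gaussianReal_conv (m1 m2 : ℝ) (v1 v2 : ℝ≥0) :
    ((gaussianReal m1 v1).prod (gaussianReal m2 v2)).map (fun p : ℝ × ℝ => p.1 + p.2)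
      = gaussianReal (m1 + m2) (v1 + v2) := by
  by_cases h1 : v1 = 0
  · subst h1
    rw [gaussianReal_zero_var, Measure.dirac_prod,
      Measure.map_map measurable_add measurable_prodMk_left]
    have : ((fun p : ℝ × ℝ => p.1 + p.2) ∘ Prod.mk m1) = (fun y => m1 + y) := rfl
    rw [this, gaussianReal_map_const_add, add_comm m2 m1, zero_add]
  by_cases h2 : v2 = 0
  · subst h2
    rw [gaussianReal_zero_var, Measure.prod_dirac,
      Measure.map_map measurable_add measurable_prodMk_right]
    have : ((fun p : ℝ × ℝ => p.1 + p.2) ∘ (fun x => (x, m2))) = (fun x => x + m2) := rfl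
    rw [this, gaussianReal_map_add_const, add_zero]
  have h12 : v1 + v2 ≠ 0 := by simp [h1]
  set f := gaussianPDF m1 v1 with hf
  set g := gaussianPDF m2 v2 with hgdef
  have hfm : Measurable f := measurable_gaussianPDF m1 v1
  have hgm : Measurable g := measurable_gaussianPDF m2 v2
  rw [gaussianReal_of_var_ne_zero _ h1, gaussianReal_of_var_ne_zero _ h2,
    gaussianReal_of_var_ne_zero _ h12]
  ext s hs
  rw [Measure.map_apply measurable_add hs, Measure.prod_apply (measurable_add hs),
    withDensity_apply _ hs]
  have hpre : ∀ x : ℝ, (Prod.mk x ⁻¹' ((fun p : ℝ × ℝ => p.1 + p.2) ⁻¹' s))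
      = (fun y => x + y) ⁻¹' s := fun x => rfl
  calc ∫⁻ x, (volume.withDensity g) (Prod.mk x ⁻¹' ((fun p : ℝ × ℝ => p.1 + p.2) ⁻¹' s))
        ∂(volume.withDensity f)
      = ∫⁻ x, (∫⁻ z in s, g (z - x) ∂volume) ∂(volume.withDensity f) := by
        refine lintegral_congr fun x => ?_
        rw [hpre x, withDensity_apply _ (hs.preimage (measurable_const_add x)),
          shift_setLIntegral g hgm x hs]
    _ = ∫⁻ x, f x * (∫⁻ z in s, g (z - x) ∂volume) ∂volume := by
        rw [lintegral_withDensity_eq_lintegral_mul volume hfm]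
        · rfl
        · exact Measurable.lintegral_prod_right (hgm.comp (measurable_snd.sub measurable_fst))
    _ = ∫⁻ x, (∫⁻ z in s, f x * g (z - x) ∂volume) ∂volume := by
        refine lintegral_congr fun x => (lintegral_const_mul (f x)
          (hgm.comp (measurable_id.sub measurable_const))).symm
    _ = ∫⁻ z in s, (∫⁻ x, f x * g (z - x) ∂volume) ∂volume := by
        refine lintegral_lintegral_swap ?_
        exact ((hfm.comp measurable_fst).mul
          (hgm.comp (measurable_snd.sub measurable_fst))).aemeasurable
    _ = ∫⁻ z in s, gaussianPDF (m1 + m2) (v1 + v2) z ∂volume := by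
        refine setLIntegral_congr_fun hs (fun z _ => ?_)
        exact lintegral_gauss_conv h1 h2 z



variable {Ω : Type*} [MeasurableSpace Ω] {P : Measure Ω} [IsProbabilityMeasure P]

lemma map_add_gauss {X Y : Ω → ℝ} (hX : Measurable X) (hY : Measurable Y)
    (hind : IndepFun X Y P) {m1 m2 : ℝ} {v1 v2 : ℝ≥0}
    (h1 : P.map X = gaussianReal m1 v1) (h2 : P.map Y = gaussianReal m2 v2) :
    P.map (fun ω => X ω + Y ω) = gaussianReal (m1 + m2) (v1 + v2) := by
  have hp : P.map (fun ω => (X ω, Y ω)) = (P.map X).prod (P.map Y) :=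
    (indepFun_iff_map_prod_eq_prod_map_map hX.aemeasurable hY.aemeasurable).mp hind
  have hc : (fun ω => X ω + Y ω) = (fun q : ℝ × ℝ => q.1 + q.2) ∘ (fun ω => (X ω, Y ω)) := rfl
  rw [hc, ← Measure.map_map measurable_add (hX.prodMk hY), hp, h1, h2, gaussianReal_conv]

lemma map_sum_gauss {ι : Type*} [Fintype ι] [DecidableEq ι] (g : ι → Ω → ℝ)
    (hgm : ∀ i, Measurable (g i))
    (hind : iIndepFun g P) (m : ι → ℝ) (v : ι → ℝ≥0)
    (hg : ∀ i, P.map (g i) = gaussianReal (m i) (v i)) :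
    P.map (fun ω => ∑ i, g i ω) = gaussianReal (∑ i, m i) (∑ i, v i) := by
  classical
  have key : ∀ s : Finset ι, P.map (fun ω => ∑ i ∈ s, g i ω)
      = gaussianReal (∑ i ∈ s, m i) (∑ i ∈ s, v i) := by
    intro s
    induction s using Finset.induction_on with
    | empty =>
        simp only [Finset.sum_empty]
        rw [show (fun _ : Ω => (0:ℝ)) = (fun _ => 0) from rfl, Measure.map_const,
          measure_univ, one_smul, gaussianReal_zero_var]
    | insert a s ha ih =>
        have hindep2 : IndepFun (g a) (fun ω => ∑ i ∈ s, g i ω) P := by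
          have h := (hind.indepFun_finset_sum_of_notMem hgm ha).symm
          have : (∑ i ∈ s, g i) = (fun ω => ∑ i ∈ s, g i ω) := by
            funext ω; simp [Finset.sum_apply]
          rwa [this] at h
        have := map_add_gauss (hgm a) (by fun_prop) hindep2 (hg a) ih
        simp only [Finset.sum_insert ha]
        exact this
  exact key Finset.univ


lemma sum3_rot {A B C : Type*} [Fintype A] [Fintype B] [Fintype C] (f : A → B → C → ℝ) :
    ∑ x, ∑ y, ∑ z, f x y z = ∑ z, ∑ x, ∑ y, f x y z :=
  calc ∑ x, ∑ y, ∑ z, f x y z = ∑ x, ∑ z, ∑ y, f x y z :=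
        Finset.sum_congr rfl fun _ _ => Finset.sum_comm
    _ = ∑ z, ∑ x, ∑ y, f x y z := Finset.sum_comm

lemma sum4_swap {p K : ℕ} (F : Fin p → Fin p → Fin K → Fin K → ℝ) :
    ∑ i, ∑ i', ∑ k, ∑ k', F i i' k k' = ∑ k, ∑ k', ∑ i, ∑ i', F i i' k k' :=
  calc ∑ i, ∑ i', ∑ k, ∑ k', F i i' k k'
      = ∑ k, ∑ i, ∑ i', ∑ k', F i i' k k' := sum3_rot _
    _ = ∑ k, ∑ k', ∑ i, ∑ i', F i i' k k' :=
        Finset.sum_congr rfl fun _ _ => sum3_rot _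

lemma quad_bilin {p K : ℕ} (T : Matrix (Fin p) (Fin p) ℝ) (u : Fin K → Fin p → ℝ)
    (a b : Fin K → ℝ) :
    ∑ i, ∑ i', (∑ k, a k * u k i) * T i i' * (∑ k', b k' * u k' i')
      = ∑ k, ∑ k', a k * b k' * (∑ i, ∑ i', u k i * T i i' * u k' i') := by
  simp_rw [Finset.sum_mul, Finset.mul_sum]
  rw [sum4_swap (fun i i' k k' => a k * u k i * T i i' * (b k' * u k' i'))]
  refine Finset.sum_congr rfl fun k _ => Finset.sum_congr rfl fun k' _ =>
    Finset.sum_congr rfl fun i _ => Finset.sum_congr rfl fun i' _ => by ring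

lemma pull_const {p : ℕ} (A : ℝ) (T : Matrix (Fin p) (Fin p) ℝ) (u v : Fin p → ℝ) :
    ∑ i, ∑ i', u i * (A * T i i') * v i' = A * ∑ i, ∑ i', u i * T i i' * v i' := by
  simp_rw [Finset.mul_sum]
  exact Finset.sum_congr rfl fun i _ => Finset.sum_congr rfl fun i' _ => by ring

lemma quad_nonneg {p : ℕ} {T : Matrix (Fin p) (Fin p) ℝ} (hT : T.PosSemidef)
    (x : Fin p → ℝ) : 0 ≤ ∑ i, ∑ i', x i * T i i' * x i' := by
  have h := hT.dotProduct_mulVec_nonneg x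
  simpa [dotProduct, Matrix.mulVec, Finset.mul_sum, mul_assoc] using h


end Helpers

open scoped NNReal

/-- Theorem 2 (decomposing one Gaussian into `K = r + 1` dependent Gaussians): with
`X ~ N_p(μ, S)`, `W₁, …, W_r ~ N_p(0, S')` mutually independent, `Q` a `K × K` orthogonal
matrix with first column `Q_X`, and `X⁽ᵏ⁾ = q_k X + ∑_j Q_{k,j+1} W_j`, the stacked
`Kp`-dimensional vector is Gaussian with mean `Q_X ⊗ μ` and covariance
`Q_X Q_Xᵀ ⊗ S + (I_K − Q_X Q_Xᵀ) ⊗ S'`. -/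
theorem decompose_single_gaussian_into_dependent_folds
    {Ω : Type*} [MeasurableSpace Ω] (P : Measure Ω) [IsProbabilityMeasure P]
    (p r : ℕ) (hr : 1 ≤ r) (μ : Fin p → ℝ)
    (S S' : Matrix (Fin p) (Fin p) ℝ) (hS : S.PosDef) (hS' : S'.PosDef)
    (X : Ω → Fin p → ℝ) (W : Fin r → Ω → Fin p → ℝ)
    (hXm : Measurable X) (hWm : ∀ j, Measurable (W j))
    (hindep : iIndepFun
      (Fin.cons X W : Fin (r + 1) → Ω → Fin p → ℝ) P)
    (hX : IsGaussianVec (P.map X) μ S)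
    (hW : ∀ j, IsGaussianVec (P.map (W j)) (fun _ => 0) S')
    (Q : Matrix (Fin (r + 1)) (Fin (r + 1)) ℝ) (hQ : Qᵀ * Q = 1)
    (Xf : Fin (r + 1) → Ω → Fin p → ℝ)
    (hXf : ∀ k ω i, Xf k ω i = Q k 0 * X ω i + ∑ j : Fin r, Q k j.succ * W j ω i) :
    IsGaussianVec
      (P.map (fun ω (ki : Fin (r + 1) × Fin p) => Xf ki.1 ω ki.2))
      (fun ki => Q ki.1 0 * μ ki.2)
      (Matrix.kroneckerMap (· * ·)
          (Matrix.vecMulVec (fun k => Q k 0) (fun k => Q k 0)) S +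
        Matrix.kroneckerMap (· * ·)
          ((1 : Matrix (Fin (r + 1)) (Fin (r + 1)) ℝ) -
            Matrix.vecMulVec (fun k => Q k 0) (fun k => Q k 0)) S') := by
  intro l
  set Z : Fin (r + 1) → Ω → Fin p → ℝ := Fin.cons X W with hZ
  set c : Fin (r + 1) → Fin p → ℝ := fun m i => ∑ k, Q k m * l (k, i) with hc
  set g : Fin (r + 1) → Ω → ℝ := fun m => (fun x : Fin p → ℝ => ∑ i, c m i * x i) ∘ Z m
    with hg
  have hφ : ∀ cm : Fin p → ℝ, Measurable (fun x : Fin p → ℝ => ∑ i, cm i * x i) :=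
    fun cm => Finset.measurable_sum _ fun i _ => (measurable_pi_apply i).const_mul _
  have hZm : ∀ m, Measurable (Z m) := by
    intro m
    refine Fin.cases ?_ ?_ m
    · simpa [hZ] using hXm
    · intro j; simpa [hZ] using hWm j
  have hgm : ∀ m, Measurable (g m) := fun m => (hφ (c m)).comp (hZm m)
  have hgind : iIndepFun g P :=
    hindep.comp (fun m x => ∑ i, c m i * x i) (fun m => hφ (c m))
  set mv : Fin (r + 1) → ℝ := Fin.cons (∑ i, c 0 i * μ i) (fun _ => 0) with hmv
  set vv : Fin (r + 1) → ℝ≥0 :=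
    Fin.cons (∑ i, ∑ i', c 0 i * S i i' * c 0 i').toNNReal
      (fun j => (∑ i, ∑ i', c j.succ i * S' i i' * c j.succ i').toNNReal) with hvv
  have hmaps : ∀ m, P.map (g m) = gaussianReal (mv m) (vv m) := by
    intro m
    refine Fin.cases ?_ ?_ m
    · have : P.map (g 0) = (P.map X).map (fun x => ∑ i, c 0 i * x i) := by
        rw [hg]
        simp only [hZ, Fin.cons_zero]
        rw [Measure.map_map (hφ (c 0)) hXm]
      rw [this, hX (c 0)]
      simp [hmv, hvv]
    · intro j
      have : P.map (g j.succ) = (P.map (W j)).map (fun x => ∑ i, c j.succ i * x i) := by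
        rw [hg]
        simp only [hZ, Fin.cons_succ]
        rw [Measure.map_map (hφ (c j.succ)) (hWm j)]
      rw [this, hW j (c j.succ)]
      simp [hmv, hvv]
  have hsum := map_sum_gauss g hgm hgind mv vv hmaps
  -- identify the LHS
  have hXfm : ∀ k, Measurable (Xf k) := by
    intro k
    have : Xf k = fun ω i => Q k 0 * X ω i + ∑ j : Fin r, Q k j.succ * W j ω i := by
      funext ω i; exact hXf k ω i
    rw [this]
    refine measurable_pi_lambda _ fun i => ?_
    exact (((measurable_pi_apply i).comp hXm).const_mul _).add
      (Finset.measurable_sum _ fun j _ =>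
        ((measurable_pi_apply i).comp (hWm j)).const_mul _)
  have hstacked : Measurable (fun ω (ki : Fin (r + 1) × Fin p) => Xf ki.1 ω ki.2) :=
    measurable_pi_lambda _ fun ki => (measurable_pi_apply ki.2).comp (hXfm ki.1)
  rw [Measure.map_map
    (Finset.measurable_sum _ fun ki _ => (measurable_pi_apply ki).const_mul _) hstacked]
  have hfun : ((fun x : Fin (r + 1) × Fin p → ℝ => ∑ ki, l ki * x ki) ∘
      (fun ω (ki : Fin (r + 1) × Fin p) => Xf ki.1 ω ki.2)) = fun ω => ∑ m, g m ω := by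
    funext ω
    simp only [Function.comp_apply]
    rw [Fintype.sum_prod_type, Fin.sum_univ_succ (f := fun m => g m ω)]
    simp only [hg, Function.comp_apply, hZ, Fin.cons_zero, Fin.cons_succ, hc]
    simp_rw [hXf, mul_add, Finset.sum_add_distrib, Finset.mul_sum, Finset.sum_mul]
    rw [sum3_rot (fun k i j => l (k, i) * (Q k j.succ * W j ω i))]
    congr 1
    · rw [Finset.sum_comm]
      exact Finset.sum_congr rfl fun i _ => Finset.sum_congr rfl fun k _ => by ring
    · refine Finset.sum_congr rfl fun j _ => ?_
      rw [Finset.sum_comm]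
      exact Finset.sum_congr rfl fun i _ => Finset.sum_congr rfl fun k _ => by ring
  rw [hfun, hsum]
  have hmean : (∑ ki : Fin (r + 1) × Fin p, l ki * (Q ki.1 0 * μ ki.2)) = ∑ m, mv m := by
    rw [Fintype.sum_prod_type, Fin.sum_univ_succ (f := mv)]
    simp only [hmv, Fin.cons_zero, Fin.cons_succ, hc]
    simp only [Finset.sum_const_zero, add_zero]
    simp_rw [Finset.sum_mul]
    rw [Finset.sum_comm]
    exact Finset.sum_congr rfl fun i _ => Finset.sum_congr rfl fun k _ => by ring
  have hvar : (∑ ki : Fin (r + 1) × Fin p, ∑ ki' : Fin (r + 1) × Fin p,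
      l ki * (Matrix.kroneckerMap (· * ·)
          (Matrix.vecMulVec (fun k => Q k 0) (fun k => Q k 0)) S +
        Matrix.kroneckerMap (· * ·)
          ((1 : Matrix (Fin (r + 1)) (Fin (r + 1)) ℝ) -
            Matrix.vecMulVec (fun k => Q k 0) (fun k => Q k 0)) S') ki ki' * l ki').toNNReal
      = ∑ m, vv m := by
    have hQQt : Q * Qᵀ = 1 := mul_eq_one_comm.mp hQ
    have horth : ∀ k k', ∑ j : Fin r, Q k j.succ * Q k' j.succ
        = (1 : Matrix (Fin (r + 1)) (Fin (r + 1)) ℝ) k k' - Q k 0 * Q k' 0 := by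
      intro k k'
      have h := congrFun (congrFun hQQt k) k'
      rw [Matrix.mul_apply] at h
      simp only [Matrix.transpose_apply] at h
      rw [Fin.sum_univ_succ] at h
      simp only [Matrix.one_apply] at h ⊢
      linarith
    set qr : Fin (r + 1) → ℝ := fun m =>
      ∑ i, ∑ i', c m i * ((Fin.cons S (fun _ => S') : Fin (r + 1) → Matrix (Fin p) (Fin p) ℝ) m) i i' * c m i'
      with hqr
    have hvvq : ∀ m, vv m = (qr m).toNNReal := by
      intro m
      refine Fin.cases ?_ ?_ m <;> simp [hvv, hqr]
    have hqnn : ∀ m, 0 ≤ qr m := by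
      intro m
      refine Fin.cases ?_ ?_ m
      · simpa [hqr] using quad_nonneg hS.posSemidef (c 0)
      · intro j; simpa [hqr] using quad_nonneg hS'.posSemidef (c j.succ)
    have hsumvv : ∑ m, vv m = (∑ m, qr m).toNNReal := by
      simp_rw [hvvq]
      exact (Real.toNNReal_sum_of_nonneg fun m _ => hqnn m).symm
    rw [hsumvv]
    congr 1
    -- the real identity
    set qS : Fin (r + 1) → Fin (r + 1) → ℝ :=
      fun k k' => ∑ i, ∑ i', l (k, i) * S i i' * l (k', i') with hqS
    set qS' : Fin (r + 1) → Fin (r + 1) → ℝ :=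
      fun k k' => ∑ i, ∑ i', l (k, i) * S' i i' * l (k', i') with hqS'
    have hRHS : ∑ m, qr m = ∑ k, ∑ k', (Q k 0 * Q k' 0 * qS k k'
        + ((1 : Matrix (Fin (r + 1)) (Fin (r + 1)) ℝ) k k' - Q k 0 * Q k' 0) * qS' k k') := by
      rw [Fin.sum_univ_succ (f := qr)]
      have h0 : qr 0 = ∑ k, ∑ k', Q k 0 * Q k' 0 * qS k k' := by
        simp only [hqr, Fin.cons_zero, hc, hqS]
        exact quad_bilin S (fun k i => l (k, i)) (fun k => Q k 0) (fun k => Q k 0)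
      have hsucc : ∀ j : Fin r, qr j.succ
          = ∑ k, ∑ k', Q k j.succ * Q k' j.succ * qS' k k' := by
        intro j
        simp only [hqr, Fin.cons_succ, hc, hqS']
        exact quad_bilin S' (fun k i => l (k, i)) (fun k => Q k j.succ) (fun k => Q k j.succ)
      rw [h0]
      simp_rw [hsucc]
      rw [sum3_rot (fun (j : Fin r) (k k' : Fin (r + 1)) =>
          Q k j.succ * Q k' j.succ * qS' k k'),
        sum3_rot (fun (k' : Fin (r + 1)) (j : Fin r) (k : Fin (r + 1)) =>
          Q k j.succ * Q k' j.succ * qS' k k')]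
      rw [← Finset.sum_add_distrib]
      refine Finset.sum_congr rfl fun k _ => ?_
      rw [← Finset.sum_add_distrib]
      refine Finset.sum_congr rfl fun k' _ => ?_
      congr 1
      rw [← Finset.sum_mul, horth k k']
    rw [hRHS]
    rw [Fintype.sum_prod_type]
    simp_rw [Fintype.sum_prod_type]
    refine (Finset.sum_congr rfl fun k _ => ?_)
    rw [Finset.sum_comm]
    refine (Finset.sum_congr rfl fun k' _ => ?_)
    simp only [Matrix.add_apply, Matrix.kroneckerMap_apply, Matrix.sub_apply,
      Matrix.vecMulVec_apply, Matrix.one_apply]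
    simp_rw [mul_add, add_mul, Finset.sum_add_distrib]
    simp only [hqS, hqS']
    refine congrArg₂ (· + ·) ?_ ?_
    · rw [← pull_const (Q k 0 * Q k' 0) S (fun i => l (k, i)) (fun i' => l (k', i'))]
    · rw [← pull_const ((if k = k' then (1:ℝ) else 0) - Q k 0 * Q k' 0) S'
        (fun i => l (k, i)) (fun i' => l (k', i'))]
  rw [hmean, hvar]
end
end

section
/- Let T be a set, μ : T → ℝ, and let C and C' : T×T → ℝ be symmetric positive semidefinite kernels. Let r ≥ 1, K = r + 1, and let X, W_1, …, W_r be real-valued stochastic processes indexed by T that are mutually independent as processes, with X ~ GP(μ, C) and W_j ~ GP(0, C') for each j. Let Q be a K×K orthogonal matrix with first column (q_1, …, q_K)ᵀ, and define X^(k)(t) = q_k X(t) + Σ_{j=1}^{r} Q_{k,j+1} W_j(t) for each t ∈ T and k = 1, …, K. Then for each k, X^(k) is a Gaussian process with mean function q_k μ and covariance function q_k² C + (1 − q_k²) C', i.e., X^(k) ~ GP(q_k μ, q_k² C + (1 − q_k²) C'). -/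
open MeasureTheory ProbabilityTheory Matrix BigOperators

noncomputable section
section AuxiliaryLemmas

open Real
open scoped NNReal ENNReal


lemma my_gaussianPDFReal_conv {v₁ v₂ : ℝ≥0} (h₁ : v₁ ≠ 0) (h₂ : v₂ ≠ 0) (m₁ m₂ z : ℝ) :
    (∫ x : ℝ, gaussianPDFReal m₁ v₁ x * gaussianPDFReal m₂ v₂ (z - x))
      = gaussianPDFReal (m₁ + m₂) (v₁ + v₂) z := by
  have ha : (0:ℝ) < (v₁ : ℝ) := by exact_mod_cast pos_iff_ne_zero.mpr h₁
  have hb : (0:ℝ) < (v₂ : ℝ) := by exact_mod_cast pos_iff_ne_zero.mpr h₂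
  set a : ℝ := (v₁ : ℝ) with hadef
  set b : ℝ := (v₂ : ℝ) with hbdef
  have hV : (0:ℝ) < a + b := by linarith
  set v' : ℝ := a * b / (a + b) with hv'def
  have hv' : 0 < v' := by positivity
  set c : ℝ := (m₁ * b + (z - m₂) * a) / (a + b) with hcdef
  have key : ∀ x : ℝ, gaussianPDFReal m₁ v₁ x * gaussianPDFReal m₂ v₂ (z - x)
      = ((√(2*π*a))⁻¹ * (√(2*π*b))⁻¹ * rexp (-(z-(m₁+m₂))^2/(2*(a+b))))
          * rexp (-(1/(2*v')) * (x - c)^2) := by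
    intro x
    simp only [gaussianPDFReal, ← hadef, ← hbdef]
    have hexp : -(x - m₁)^2/(2*a) + -(z - x - m₂)^2/(2*b)
        = -(z-(m₁+m₂))^2/(2*(a+b)) + (-(1/(2*v')) * (x - c)^2) := by
      rw [hcdef, hv'def]
      field_simp
      ring
    calc (√(2*π*a))⁻¹ * rexp (-(x - m₁)^2/(2*a)) * ((√(2*π*b))⁻¹ * rexp (-(z - x - m₂)^2/(2*b)))
        = (√(2*π*a))⁻¹ * (√(2*π*b))⁻¹ * rexp (-(x - m₁)^2/(2*a) + -(z - x - m₂)^2/(2*b)) := by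
          rw [Real.exp_add]; ring
      _ = _ := by rw [hexp, Real.exp_add]; ring
  rw [integral_congr_ae (Filter.Eventually.of_forall key), integral_const_mul]
  have hsub : (∫ x : ℝ, rexp (-(1/(2*v')) * (x - c)^2)) = ∫ x : ℝ, rexp (-(1/(2*v')) * x^2) := by
    exact integral_sub_right_eq_self (fun x => rexp (-(1/(2*v')) * x^2)) c
  rw [hsub, integral_gaussian]
  have h2v' : π / (1/(2*v')) = 2 * π * v' := by field_simp
  rw [h2v']
  have hcoe : ((v₁ + v₂ : ℝ≥0) : ℝ) = a + b := by push_cast; rfl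
  simp only [gaussianPDFReal, hcoe]
  have hs : √(2*π*a) * √(2*π*b) = √(2*π*v') * √(2*π*(a+b)) := by
    rw [← Real.sqrt_mul (by positivity), ← Real.sqrt_mul (by positivity)]
    congr 1
    rw [hv'def]; field_simp
  have h1 : √(2*π*a) ≠ 0 := by positivity
  have h2 : √(2*π*b) ≠ 0 := by positivity
  have h3 : √(2*π*v') ≠ 0 := by positivity
  have h4 : √(2*π*(a+b)) ≠ 0 := by positivity
  have hconst : (√(2*π*a))⁻¹ * (√(2*π*b))⁻¹ * √(2*π*v') = (√(2*π*(a+b)))⁻¹ := by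
    rw [← mul_inv, mul_comm, ← div_eq_mul_inv, hs, ← div_div, div_self h3, one_div]
  calc (√(2*π*a))⁻¹ * (√(2*π*b))⁻¹ * rexp (-(z-(m₁+m₂))^2/(2*(a+b))) * √(2*π*v')
      = ((√(2*π*a))⁻¹ * (√(2*π*b))⁻¹ * √(2*π*v')) * rexp (-(z-(m₁+m₂))^2/(2*(a+b))) := by ring
    _ = (√(2*π*(a+b)))⁻¹ * rexp (-(z - (m₁+m₂))^2/(2*(a+b))) := by rw [hconst]

lemma my_integrable_conv {v₁ v₂ : ℝ≥0} (m₁ m₂ z : ℝ) :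
    Integrable (fun x : ℝ => gaussianPDFReal m₁ v₁ x * gaussianPDFReal m₂ v₂ (z - x)) := by
  have hmeas : Measurable (fun x : ℝ => gaussianPDFReal m₁ v₁ x * gaussianPDFReal m₂ v₂ (z - x)) :=
    (measurable_gaussianPDFReal m₁ v₁).mul
      ((measurable_gaussianPDFReal m₂ v₂).comp (measurable_const.sub measurable_id))
  have hle : ∀ x : ℝ, gaussianPDFReal m₂ v₂ (z - x) ≤ (√(2*π*(v₂:ℝ)))⁻¹ := by
    intro x
    have : rexp (-(z - x - m₂)^2 / (2*(v₂:ℝ))) ≤ 1 := by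
      rw [Real.exp_le_one_iff]
      rcases eq_or_ne v₂ 0 with h | h
      · simp [h]
      · have : (0:ℝ) < (v₂:ℝ) := by exact_mod_cast pos_iff_ne_zero.mpr h
        apply div_nonpos_of_nonpos_of_nonneg
        · simpa using sq_nonneg (z - x - m₂)
        · positivity
    calc gaussianPDFReal m₂ v₂ (z - x) = (√(2*π*(v₂:ℝ)))⁻¹ * rexp (-(z - x - m₂)^2/(2*(v₂:ℝ))) := rfl
      _ ≤ (√(2*π*(v₂:ℝ)))⁻¹ * 1 := by
          apply mul_le_mul_of_nonneg_left this (by positivity)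
      _ = (√(2*π*(v₂:ℝ)))⁻¹ := mul_one _
  refine Integrable.mono ((integrable_gaussianPDFReal m₁ v₁).const_mul ((√(2*π*(v₂:ℝ)))⁻¹))
    hmeas.aestronglyMeasurable (ae_of_all _ fun x => ?_)
  have h1 := gaussianPDFReal_nonneg m₁ v₁ x
  have h2 := gaussianPDFReal_nonneg m₂ v₂ (z - x)
  have h3 : (0:ℝ) ≤ (√(2*π*(v₂:ℝ)))⁻¹ := by positivity
  simp only [Real.norm_eq_abs, abs_of_nonneg (mul_nonneg h1 h2), abs_of_nonneg (mul_nonneg h3 h1)]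
  calc gaussianPDFReal m₁ v₁ x * gaussianPDFReal m₂ v₂ (z - x)
      ≤ gaussianPDFReal m₁ v₁ x * (√(2*π*(v₂:ℝ)))⁻¹ := by
        exact mul_le_mul_of_nonneg_left (hle x) h1
    _ = (√(2*π*(v₂:ℝ)))⁻¹ * gaussianPDFReal m₁ v₁ x := mul_comm _ _

lemma my_lintegral_gaussianPDF_conv {v₁ v₂ : ℝ≥0} (h₁ : v₁ ≠ 0) (h₂ : v₂ ≠ 0) (m₁ m₂ z : ℝ) :
    (∫⁻ x : ℝ, gaussianPDF m₁ v₁ x * gaussianPDF m₂ v₂ (z - x))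
      = gaussianPDF (m₁ + m₂) (v₁ + v₂) z := by
  simp only [gaussianPDF]
  simp_rw [← ENNReal.ofReal_mul (gaussianPDFReal_nonneg m₁ v₁ _)]
  rw [← ofReal_integral_eq_lintegral_ofReal (my_integrable_conv m₁ m₂ z)
    (ae_of_all _ fun x => mul_nonneg (gaussianPDFReal_nonneg _ _ _) (gaussianPDFReal_nonneg _ _ _)),
    my_gaussianPDFReal_conv h₁ h₂ m₁ m₂ z]

lemma my_conv_withDensity (f g : ℝ → ℝ≥0∞) (hf : Measurable f) (hg : Measurable g) :
    Measure.conv (volume.withDensity f) (volume.withDensity g)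
      = volume.withDensity (fun z => ∫⁻ x, f x * g (z - x)) := by
  ext s hs
  have hindm : Measurable (s.indicator (fun _ => (1:ℝ≥0∞))) := measurable_one.indicator hs
  have hA : MeasurableSet ((fun p : ℝ × ℝ => p.1 + p.2) ⁻¹' s) := measurable_add hs
  rw [Measure.conv, Measure.map_apply measurable_add hs, Measure.prod_apply hA,
    lintegral_withDensity_eq_lintegral_mul _ hf (measurable_measure_prodMk_left hA)]
  have hinner : ∀ x : ℝ, (volume.withDensity g) (Prod.mk x ⁻¹' ((fun p : ℝ × ℝ => p.1 + p.2) ⁻¹' s))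
      = ∫⁻ y, s.indicator (fun _ => 1) y * g (y - x) := by
    intro x
    have hpre : MeasurableSet ((fun y => x + y) ⁻¹' s) := (measurable_const_add x) hs
    have h0 : (Prod.mk x ⁻¹' ((fun p : ℝ × ℝ => p.1 + p.2) ⁻¹' s)) = (fun y => x + y) ⁻¹' s := rfl
    rw [h0, withDensity_apply _ hpre, ← lintegral_indicator hpre]
    have heq : ∀ y : ℝ, ((fun y => x + y) ⁻¹' s).indicator g y
        = s.indicator (fun _ => 1) (x + y) * g y := by
      intro y
      by_cases hy : x + y ∈ s <;> simp [Set.indicator, hy, Set.mem_preimage]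
    simp_rw [heq]
    rw [← lintegral_add_left_eq_self (fun y => s.indicator (fun _ => (1:ℝ≥0∞)) y * g (y - x)) x]
    simp
  simp_rw [hinner]
  have hswap : ∫⁻ x, f x * ∫⁻ y, s.indicator (fun _ => 1) y * g (y - x)
      = ∫⁻ y, s.indicator (fun _ => 1) y * ∫⁻ x, f x * g (y - x) := by
    have hmeas2 : Measurable (Function.uncurry fun x y =>
        f x * (s.indicator (fun _ => (1:ℝ≥0∞)) y * g (y - x))) := by
      apply Measurable.mul
      · exact hf.comp measurable_fst
      · exact (hindm.comp measurable_snd).mul (hg.comp (measurable_snd.sub measurable_fst))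
    calc ∫⁻ x, f x * ∫⁻ y, s.indicator (fun _ => (1:ℝ≥0∞)) y * g (y - x)
        = ∫⁻ x, ∫⁻ y, f x * (s.indicator (fun _ => (1:ℝ≥0∞)) y * g (y - x)) := by
          congr 1; ext x
          exact (lintegral_const_mul (f x)
            ((hindm.mul (hg.comp (measurable_id.sub measurable_const))) :
              Measurable fun y => s.indicator (fun _ => (1:ℝ≥0∞)) y * g (y - x))).symm
      _ = ∫⁻ y, ∫⁻ x, f x * (s.indicator (fun _ => (1:ℝ≥0∞)) y * g (y - x)) :=
          lintegral_lintegral_swap hmeas2.aemeasurable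
      _ = ∫⁻ y, s.indicator (fun _ => (1:ℝ≥0∞)) y * ∫⁻ x, f x * g (y - x) := by
          congr 1; ext y
          simp_rw [mul_left_comm (f _)]
          exact lintegral_const_mul (s.indicator (fun _ => (1:ℝ≥0∞)) y)
            ((hf.mul (hg.comp (measurable_const.sub measurable_id))) :
              Measurable fun x => f x * g (y - x))
  simp only [Pi.mul_apply]
  rw [hswap, withDensity_apply _ hs, ← lintegral_indicator hs]
  congr 1; ext y
  by_cases hy : y ∈ s <;> simp [Set.indicator, hy]

lemma my_gaussianReal_conv (m₁ m₂ : ℝ) (v₁ v₂ : ℝ≥0) :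
    Measure.conv (gaussianReal m₁ v₁) (gaussianReal m₂ v₂) = gaussianReal (m₁ + m₂) (v₁ + v₂) := by
  rcases eq_or_ne v₁ 0 with h₁ | h₁
  · rw [h₁, gaussianReal_zero_var, Measure.conv, Measure.dirac_prod,
      Measure.map_map measurable_add measurable_prodMk_left]
    have h0 : ((fun p : ℝ × ℝ => p.1 + p.2) ∘ (Prod.mk m₁)) = (fun y => m₁ + y) := rfl
    rw [h0, gaussianReal_map_const_add, add_comm m₂ m₁, zero_add]
  rcases eq_or_ne v₂ 0 with h₂ | h₂
  · rw [h₂, gaussianReal_zero_var, Measure.conv, Measure.prod_dirac,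
      Measure.map_map measurable_add measurable_prodMk_right]
    have h0 : ((fun p : ℝ × ℝ => p.1 + p.2) ∘ (fun x : ℝ => (x, m₂))) = (fun x => x + m₂) := rfl
    rw [h0, gaussianReal_map_add_const, add_zero]
  · have h12 : v₁ + v₂ ≠ 0 := fun h => h₁ (by simpa using (add_eq_zero.mp h).1)
    rw [gaussianReal_of_var_ne_zero m₁ h₁, gaussianReal_of_var_ne_zero m₂ h₂,
      gaussianReal_of_var_ne_zero _ h12,
      my_conv_withDensity _ _ (measurable_gaussianPDF _ _) (measurable_gaussianPDF _ _)]
    congr 1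
    ext z
    exact my_lintegral_gaussianPDF_conv h₁ h₂ m₁ m₂ z

lemma my_indepFun_map_add {Ω : Type*} [MeasurableSpace Ω] {P : Measure Ω} [IsProbabilityMeasure P]
    {f g : Ω → ℝ} (h : ProbabilityTheory.IndepFun f g P) (hf : Measurable f) (hg : Measurable g) :
    P.map (fun ω => f ω + g ω) = Measure.conv (P.map f) (P.map g) := by
  rw [Measure.conv, ← (ProbabilityTheory.indepFun_iff_map_prod_eq_prod_map_map hf.aemeasurable
    hg.aemeasurable).mp h, Measure.map_map measurable_add (hf.prodMk hg)]
  rfl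

lemma my_sum_indep_gaussian {Ω ι : Type*} [MeasurableSpace Ω] {P : Measure Ω}
    [IsProbabilityMeasure P] {Y : ι → Ω → ℝ}
    (h_indep : ProbabilityTheory.iIndepFun Y P)
    (h_meas : ∀ i, Measurable (Y i)) (m : ι → ℝ) (v : ι → ℝ≥0)
    (hY : ∀ i, P.map (Y i) = gaussianReal (m i) (v i)) (s : Finset ι) :
    P.map (fun ω => ∑ i ∈ s, Y i ω) = gaussianReal (∑ i ∈ s, m i) (∑ i ∈ s, v i) := by
  classical
  induction s using Finset.induction_on with
  | empty =>
      simp only [Finset.sum_empty]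
      rw [Measure.map_const, measure_univ, one_smul, gaussianReal_zero_var]
  | insert i s hi ih =>
      have hsum : Measurable (fun ω => ∑ j ∈ s, Y j ω) := by
        exact Finset.measurable_sum s (fun j _ => h_meas j)
      have hind : ProbabilityTheory.IndepFun (Y i) (fun ω => ∑ j ∈ s, Y j ω) P := by
        have h0 := (h_indep.indepFun_finsetSum_of_notMem h_meas hi).symm
        have : (∑ j ∈ s, Y j) = fun ω => ∑ j ∈ s, Y j ω := by
          ext ω; simp [Finset.sum_apply]
        rwa [this] at h0
      have heq : (fun ω => ∑ j ∈ insert i s, Y j ω)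
          = fun ω => Y i ω + ∑ j ∈ s, Y j ω := by
        ext ω; exact Finset.sum_insert hi
      rw [heq, my_indepFun_map_add hind (h_meas i) hsum, hY i, ih,
        my_gaussianReal_conv, Finset.sum_insert hi, Finset.sum_insert hi]

end AuxiliaryLemmas

/-- A real-valued stochastic process `X` indexed by `T` on the probability space `(Ω, P)` is a
Gaussian process with mean function `μ` and covariance function `C` if all of its
finite-dimensional distributions are multivariate Gaussian with the corresponding mean vectors
and covariance matrices. -/
def IsGaussianProcess {Ω T : Type*} [MeasurableSpace Ω] (P : Measure Ω)
    (X : T → Ω → ℝ) (μ : T → ℝ) (C : T → T → ℝ) : Prop :=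
  ∀ (d : ℕ) (t : Fin d → T),
    IsGaussianVec (P.map (fun ω i => X (t i) ω)) (fun i => μ (t i))
      (Matrix.of fun i j => C (t i) (t j))

/-- Theorem 5, marginal part (decomposing one Gaussian process into `K = r + 1` dependent
Gaussian processes): with `X ~ GP(μ, C)` and `W₁, …, W_r ~ GP(0, C')` mutually independent as
processes, `Q` a `K × K` orthogonal matrix with first column `(q₁, …, q_K)ᵀ`, and
`X⁽ᵏ⁾(t) = q_k X(t) + ∑_j Q_{k,j+1} W_j(t)`, each `X⁽ᵏ⁾ ~ GP(q_k μ, q_k² C + (1 − q_k²) C')`. -/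
theorem gaussian_process_dependent_marginals
    {Ω T : Type*} [MeasurableSpace Ω] (P : Measure Ω) [IsProbabilityMeasure P]
    (μ : T → ℝ) (C C' : T → T → ℝ)
    (hCsymm : ∀ s t, C s t = C t s)
    (hCpsd : ∀ (d : ℕ) (t : Fin d → T) (c : Fin d → ℝ),
      0 ≤ ∑ i, ∑ j, c i * C (t i) (t j) * c j)
    (hC'symm : ∀ s t, C' s t = C' t s)
    (hC'psd : ∀ (d : ℕ) (t : Fin d → T) (c : Fin d → ℝ),
      0 ≤ ∑ i, ∑ j, c i * C' (t i) (t j) * c j)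
    (r : ℕ) (hr : 1 ≤ r)
    (X : T → Ω → ℝ) (W : Fin r → T → Ω → ℝ)
    (hXm : ∀ t, Measurable (X t)) (hWm : ∀ j t, Measurable (W j t))
    (hindep : iIndepFun
      (Fin.cons (fun ω t => X t ω) (fun j ω t => W j t ω) : Fin (r + 1) → Ω → T → ℝ) P)
    (hX : IsGaussianProcess P X μ C)
    (hW : ∀ j, IsGaussianProcess P (W j) (fun _ => 0) C')
    (Q : Matrix (Fin (r + 1)) (Fin (r + 1)) ℝ) (hQ : Qᵀ * Q = 1)
    (Xf : Fin (r + 1) → T → Ω → ℝ)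
    (hXf : ∀ k t ω, Xf k t ω = Q k 0 * X t ω + ∑ j : Fin r, Q k j.succ * W j t ω) :
    ∀ k, IsGaussianProcess P (Xf k) (fun t => Q k 0 * μ t)
      (fun s t => (Q k 0) ^ 2 * C s t + (1 - (Q k 0) ^ 2) * C' s t) := by
  intro k d t l
  -- notation
  set Z : Fin (r + 1) → Ω → T → ℝ :=
    (Fin.cons (fun ω t => X t ω) (fun j ω t => W j t ω)) with hZdef
  have hZmeas : ∀ m, Measurable (Z m) := by
    intro m
    refine Fin.cases ?_ ?_ m
    · exact measurable_pi_lambda _ (fun s => by simpa [hZdef] using hXm s)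
    · intro j
      exact measurable_pi_lambda _ (fun s => by simpa [hZdef] using hWm j s)
  -- the scalar independent family
  set g : Fin (r + 1) → (T → ℝ) → ℝ := fun m f => Q k m * ∑ i, l i * f (t i) with hgdef
  have hgmeas : ∀ m, Measurable (g m) := fun m =>
    (Finset.measurable_sum _ fun i _ =>
      (measurable_pi_apply (X := fun _ : T => ℝ) (t i)).const_mul (l i)).const_mul _
  set Y : Fin (r + 1) → Ω → ℝ := fun m => g m ∘ Z m with hYdef
  have hYindep : iIndepFun Y P := hindep.comp g hgmeas
  have hYmeas : ∀ m, Measurable (Y m) := fun m => (hgmeas m).comp (hZmeas m)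
  -- the parameters
  set mb : Fin (r + 1) → ℝ :=
    Fin.cons (∑ i, l i * μ (t i)) (fun _ => ∑ i, l i * (0 : ℝ)) with hmbdef
  set vb : Fin (r + 1) → NNReal :=
    Fin.cons ((∑ i, ∑ j, l i * C (t i) (t j) * l j).toNNReal)
      (fun _ => (∑ i, ∑ j, l i * C' (t i) (t j) * l j).toNNReal) with hvbdef
  -- laws of the Y m
  have hYlaw : ∀ m, P.map (Y m)
      = gaussianReal (Q k m * mb m) (⟨(Q k m) ^ 2, sq_nonneg _⟩ * vb m) := by
    intro m
    have key : ∀ (a : ℝ) (V : Ω → T → ℝ) (μ0 : T → ℝ) (C0 : T → T → ℝ), Measurable V →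
        IsGaussianVec (P.map (fun ω i => V ω (t i))) (fun i => μ0 (t i))
          (Matrix.of fun i j => C0 (t i) (t j)) →
        P.map (fun ω => a * ∑ i, l i * V ω (t i))
          = gaussianReal (a * ∑ i, l i * μ0 (t i))
            (⟨a ^ 2, sq_nonneg _⟩ * (∑ i, ∑ j, l i * C0 (t i) (t j) * l j).toNNReal) := by
      intro a V μ0 C0 hVmeas hgauss
      have hVvec : Measurable (fun ω i => V ω (t i)) :=
        measurable_pi_lambda _ (fun i => (measurable_pi_apply (t i)).comp hVmeas)
      have hsum : Measurable (fun x : Fin d → ℝ => ∑ i, l i * x i) :=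
        Finset.measurable_sum _ fun i _ => (measurable_pi_apply (X := fun _ : Fin d => ℝ) i).const_mul (l i)
      have h1 : P.map (fun ω => ∑ i, l i * V ω (t i))
          = gaussianReal (∑ i, l i * μ0 (t i))
            (∑ i, ∑ j, l i * C0 (t i) (t j) * l j).toNNReal := by
        have := hgauss l
        rwa [Measure.map_map hsum hVvec] at this
      have hmul : Measurable fun x : ℝ => a * x := measurable_const.mul measurable_id
      have h2 : P.map (fun ω => a * ∑ i, l i * V ω (t i))
          = (P.map (fun ω => ∑ i, l i * V ω (t i))).map (fun x => a * x) :=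
        (Measure.map_map hmul (hsum.comp hVvec)).symm
      rw [h2, h1, gaussianReal_map_const_mul]; rfl
    refine Fin.cases ?_ ?_ m
    · have h0 := key (Q k 0) (fun ω s => X s ω) μ C (measurable_pi_lambda _ hXm) (hX d t)
      simp only [hYdef, hgdef, hZdef, hmbdef, hvbdef, Function.comp_def, Fin.cons_zero]
      exact h0
    · intro j
      have h0 := key (Q k j.succ) (fun ω s => W j s ω) (fun _ => 0) C'
        (measurable_pi_lambda _ (hWm j)) (hW j d t)
      simp only [hYdef, hgdef, hZdef, hmbdef, hvbdef, Function.comp_def, Fin.cons_succ]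
      exact h0
  -- the sum of the Y m is the functional of Xf
  have hXfm : ∀ s, Measurable (Xf k s) := by
    intro s
    have : Xf k s = fun ω => Q k 0 * X s ω + ∑ j : Fin r, Q k j.succ * W j s ω := by
      ext ω; exact hXf k s ω
    rw [this]
    exact ((hXm s).const_mul _).add
      (Finset.measurable_sum _ fun j _ => (hWm j s).const_mul _)
  have hXfvec : Measurable (fun ω i => Xf k (t i) ω) :=
    measurable_pi_lambda _ (fun i => hXfm (t i))
  have hsumfun : (fun ω => ∑ i, l i * Xf k (t i) ω) = fun ω => ∑ m, Y m ω := by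
    ext ω
    have hterm : ∀ i, Xf k (t i) ω = ∑ m, Q k m * Z m ω (t i) := by
      intro i
      rw [Fin.sum_univ_succ]
      simp only [hZdef, Fin.cons_zero, Fin.cons_succ]
      exact hXf k (t i) ω
    simp only [hYdef, hgdef, Function.comp_def]
    simp_rw [hterm, Finset.mul_sum, mul_left_comm]
    exact Finset.sum_comm
  -- orthogonality of the row k of Q
  have hrow : Q k 0 ^ 2 + ∑ j : Fin r, Q k j.succ ^ 2 = 1 := by
    have h1 : Q * Qᵀ = 1 := mul_eq_one_comm.mp hQ
    have h2 : (Q * Qᵀ) k k = (1 : Matrix (Fin (r+1)) (Fin (r+1)) ℝ) k k := by rw [h1]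
    simp only [Matrix.mul_apply, Matrix.transpose_apply, Matrix.one_apply_eq] at h2
    rw [← h2, Fin.sum_univ_succ]
    simp [sq]
  have h1q : 0 ≤ 1 - Q k 0 ^ 2 := by
    have := Finset.sum_nonneg (fun (j : Fin r) (_ : j ∈ Finset.univ) => sq_nonneg (Q k j.succ))
    linarith [hrow]
  have hsq : ∑ j : Fin r, Q k j.succ ^ 2 = 1 - Q k 0 ^ 2 := by linarith [hrow]
  -- conclude
  have hLmeas : Measurable (fun x : Fin d → ℝ => ∑ i, l i * x i) :=
    Finset.measurable_sum _ fun i _ => (measurable_pi_apply (X := fun _ : Fin d => ℝ) i).const_mul (l i)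
  have hmain := my_sum_indep_gaussian hYindep hYmeas _ _ hYlaw Finset.univ
  rw [Measure.map_map hLmeas hXfvec]
  have hcompeq : ((fun x : Fin d → ℝ => ∑ i, l i * x i) ∘ fun ω i => Xf k (t i) ω)
      = fun ω => ∑ m, Y m ω := hsumfun
  rw [hcompeq, hmain]
  congr 1
  · -- means
    rw [Fin.sum_univ_succ]
    simp only [hmbdef, Fin.cons_zero, Fin.cons_succ, mul_zero, Finset.sum_const_zero, add_zero]
    rw [Finset.mul_sum]
    exact Finset.sum_congr rfl fun i _ => by ring
  · -- variances
    have hC0 : 0 ≤ ∑ i, ∑ j, l i * C (t i) (t j) * l j := hCpsd d t l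
    have hC0' : 0 ≤ ∑ i, ∑ j, l i * C' (t i) (t j) * l j := hC'psd d t l
    have hsplit : ∑ i, ∑ j, l i * ((Q k 0) ^ 2 * C (t i) (t j)
        + (1 - (Q k 0) ^ 2) * C' (t i) (t j)) * l j
        = (Q k 0) ^ 2 * (∑ i, ∑ j, l i * C (t i) (t j) * l j)
          + (1 - (Q k 0) ^ 2) * (∑ i, ∑ j, l i * C' (t i) (t j) * l j) := by
      rw [Finset.mul_sum, Finset.mul_sum, ← Finset.sum_add_distrib]
      refine Finset.sum_congr rfl fun i _ => ?_
      rw [Finset.mul_sum, Finset.mul_sum, ← Finset.sum_add_distrib]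
      refine Finset.sum_congr rfl fun j _ => ?_
      ring
    have hRHS : 0 ≤ ∑ i, ∑ j, l i * ((Q k 0) ^ 2 * C (t i) (t j)
        + (1 - (Q k 0) ^ 2) * C' (t i) (t j)) * l j := by
      rw [hsplit]; positivity
    apply NNReal.coe_injective
    rw [NNReal.coe_sum, Fin.sum_univ_succ]
    simp only [hvbdef, Fin.cons_zero, Fin.cons_succ, NNReal.coe_mul, NNReal.coe_mk,
      Real.coe_toNNReal _ hC0, Real.coe_toNNReal _ hC0', Matrix.of_apply,
      Real.coe_toNNReal _ hRHS]
    erw [NNReal.coe_mul, Finset.sum_congr rfl fun x _ => NNReal.coe_mul _ _]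
    simp only [Real.coe_toNNReal _ hC0, Real.coe_toNNReal _ hC0']
    rw [← Finset.sum_mul]
    change (Q k 0 ^ 2) * _ + (∑ i : Fin r, Q k i.succ ^ 2) * _ = _
    rw [hsq, hsplit]
end
end
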